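/- arXiv:1206.1196 — 3 statements merged into one kernel-verified Lean document; each statement's English description precedes it below -/
import Mathlib

section
/- Let G be a group of orientation-preserving homeomorphisms of the real line acting freely (no element other than the identity has a fixed point). Then G is abelian. -/
namespace HolderAux

variable {G : Subgroup (Equiv.Perm ℝ)}



theorem eq_of_eq_at (hfree : ∀ g ∈ G, g ≠ 1 → ∀ x : ℝ, g x ≠ x)
    {g h : Equiv.Perm ℝ} (hg : g ∈ G) (hh : h ∈ G) {a : ℝ}
    (hgh : g a = h a) : g = h := by
  have hmem : h⁻¹ * g ∈ G := mul_mem (inv_mem hh) hg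
  by_contra hne
  have hne1 : h⁻¹ * g ≠ 1 := by
    intro he
    rw [inv_mul_eq_one] at he
    exact hne he.symm
  refine hfree _ hmem hne1 a ?_
  rw [Equiv.Perm.mul_apply, hgh, show ∀ y, h⁻¹ (h y) = y from Equiv.symm_apply_apply h]

theorem total (hfree : ∀ g ∈ G, g ≠ 1 → ∀ x : ℝ, g x ≠ x)
    (hcont : ∀ g ∈ G, Continuous ⇑g ∧ Continuous ⇑g.symm)
    {g h : Equiv.Perm ℝ} (hg : g ∈ G) (hh : h ∈ G) :
    (∀ x, g x ≤ h x) ∨ (∀ x, h x ≤ g x) := by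
  by_contra hc
  push_neg at hc
  obtain ⟨⟨u, hu⟩, v, hv⟩ := hc
  have hF : Continuous (fun t => g t - h t) := ((hcont g hg).1).sub ((hcont h hh).1)
  have h0 : (0:ℝ) ∈ Set.Icc ((fun t => g t - h t) v) ((fun t => g t - h t) u) := by
    simp only [Set.mem_Icc]
    constructor <;> linarith
  obtain ⟨t, ht⟩ := intermediate_value_univ v u hF h0
  have hgt : g t = h t := by
    have h1 : g t - h t = 0 := ht
    linarith
  have := eq_of_eq_at hfree hg hh hgt
  rw [this] at hu
  exact lt_irrefl _ hu

theorem le_ext (hfree : ∀ g ∈ G, g ≠ 1 → ∀ x : ℝ, g x ≠ x)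
    (hcont : ∀ g ∈ G, Continuous ⇑g ∧ Continuous ⇑g.symm)
    {g h : Equiv.Perm ℝ} (hg : g ∈ G) (hh : h ∈ G) {a : ℝ}
    (hle : g a ≤ h a) : ∀ x, g x ≤ h x := by
  rcases total hfree hcont hg hh with H | H
  · exact H
  · have hga : g a = h a := le_antisymm hle (H a)
    have := eq_of_eq_at hfree hg hh hga
    exact this ▸ fun x => le_rfl

theorem pos_everywhere (hfree : ∀ g ∈ G, g ≠ 1 → ∀ x : ℝ, g x ≠ x)
    (hcont : ∀ g ∈ G, Continuous ⇑g ∧ Continuous ⇑g.symm)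
    {g : Equiv.Perm ℝ} (hg : g ∈ G) {a : ℝ} (ha : a < g a) : ∀ x, x < g x := by
  intro x
  have h1 : (1 : Equiv.Perm ℝ) a ≤ g a := by simpa using le_of_lt ha
  have h2 := le_ext hfree hcont (one_mem G) hg h1 x
  simp only [Equiv.Perm.one_apply] at h2
  rcases lt_or_eq_of_le h2 with h | h
  · exact h
  · exfalso
    have hg1 : g = 1 := eq_of_eq_at hfree hg (one_mem G) (by simpa using h.symm)
    rw [hg1] at ha; simp at ha

theorem pow_le_pow (hmono : ∀ g ∈ G, StrictMono ⇑g)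
    {g h : Equiv.Perm ℝ} (hg : g ∈ G) (hh : h ∈ G)
    (hle : ∀ x, g x ≤ h x) : ∀ (n : ℕ) (x : ℝ), (g ^ n) x ≤ (h ^ n) x := by
  intro n
  induction n with
  | zero => simp
  | succ n ih =>
    intro x
    rw [pow_succ, pow_succ]
    simp only [Equiv.Perm.mul_apply]
    calc (g ^ n) (g x) ≤ (h ^ n) (g x) := ih _
      _ ≤ (h ^ n) (h x) := ((hmono _ (pow_mem hh n)).monotone) (hle x)

theorem pow_lt_pow_at (hmono : ∀ g ∈ G, StrictMono ⇑g)
    {g h : Equiv.Perm ℝ} (hg : g ∈ G) (hh : h ∈ G)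
    (hle : ∀ x, g x ≤ h x) {a : ℝ} (hlt : g a < h a) :
    ∀ (n : ℕ), (g ^ (n+1)) a < (h ^ (n+1)) a := by
  intro n
  induction n with
  | zero => simpa using hlt
  | succ n ih =>
    rw [pow_succ' g (n+1), pow_succ' h (n+1)]
    simp only [Equiv.Perm.mul_apply]
    calc g ((g ^ (n+1)) a) < g ((h ^ (n+1)) a) := (hmono g hg) ih
      _ ≤ h ((h ^ (n+1)) a) := hle _

/-- sorting: h before g^n -/
theorem sort1 (hmono : ∀ g ∈ G, StrictMono ⇑g)
    {g h : Equiv.Perm ℝ} (hg : g ∈ G) (hh : h ∈ G)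
    (hc : ∀ x, h (g x) ≤ g (h x)) : ∀ (n : ℕ) (x : ℝ), h ((g ^ n) x) ≤ (g ^ n) (h x) := by
  intro n
  induction n with
  | zero => simp
  | succ n ih =>
    intro x
    rw [pow_succ' g n]
    simp only [Equiv.Perm.mul_apply]
    calc h (g ((g ^ n) x)) ≤ g (h ((g ^ n) x)) := hc _
      _ ≤ g ((g ^ n) (h x)) := (hmono g hg).monotone (ih x)

theorem sort1' (hmono : ∀ g ∈ G, StrictMono ⇑g)
    {g h : Equiv.Perm ℝ} (hg : g ∈ G) (hh : h ∈ G)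
    (hc : ∀ x, h (g x) ≤ g (h x)) : ∀ (n : ℕ) (x : ℝ), (h ^ n) (g x) ≤ g ((h ^ n) x) := by
  intro n
  induction n with
  | zero => simp
  | succ n ih =>
    intro x
    rw [pow_succ' h n]
    simp only [Equiv.Perm.mul_apply]
    calc h ((h ^ n) (g x)) ≤ h (g ((h ^ n) x)) := (hmono h hh).monotone (ih x)
      _ ≤ g (h ((h ^ n) x)) := hc _

theorem sort2 (hmono : ∀ g ∈ G, StrictMono ⇑g)
    {g h : Equiv.Perm ℝ} (hg : g ∈ G) (hh : h ∈ G)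
    (hc : ∀ x, h (g x) ≤ g (h x)) :
    ∀ (n : ℕ) (x : ℝ), ((g * h) ^ n) x ≤ (g ^ n) ((h ^ n) x) := by
  intro n
  induction n with
  | zero => simp
  | succ n ih =>
    intro x
    rw [pow_succ' (g*h) n, pow_succ' g n, pow_succ' h n]
    simp only [Equiv.Perm.mul_apply]
    calc g (h (((g*h) ^ n) x)) ≤ g (h ((g ^ n) ((h ^ n) x))) := by
          exact (hmono g hg).monotone ((hmono h hh).monotone (ih x))
      _ ≤ g ((g ^ n) (h ((h ^ n) x))) := (hmono g hg).monotone (sort1 hmono hg hh hc n _)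

theorem sort3 (hmono : ∀ g ∈ G, StrictMono ⇑g)
    {g h : Equiv.Perm ℝ} (hg : g ∈ G) (hh : h ∈ G)
    (hc : ∀ x, h (g x) ≤ g (h x)) :
    ∀ (n : ℕ) (x : ℝ), (h ^ n) ((g ^ n) x) ≤ ((h * g) ^ n) x := by
  intro n
  induction n with
  | zero => simp
  | succ n ih =>
    intro x
    rw [pow_succ' (h*g) n, pow_succ' g n, pow_succ' h n]
    simp only [Equiv.Perm.mul_apply]
    calc h ((h ^ n) (g ((g ^ n) x))) ≤ h (g ((h ^ n) ((g ^ n) x))) := by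
          exact (hmono h hh).monotone (sort1' hmono hg hh hc n _)
      _ ≤ h (g (((h*g) ^ n) x)) := by
          exact (hmono h hh).monotone ((hmono g hg).monotone (ih x))



/-- orbits of positive elements are unbounded above -/
theorem orbit_unbdd (hmono : ∀ g ∈ G, StrictMono ⇑g)
    {f : Equiv.Perm ℝ} (hfG : f ∈ G) (hf : ∀ x, x < f x) (y : ℝ) :
    ∃ n : ℕ, y < (f ^ n) 0 := by
  by_contra hb
  push_neg at hb
  set s : ℕ → ℝ := fun n => (f ^ n) 0 with hs
  have hne : (Set.range s).Nonempty := ⟨s 0, Set.mem_range_self 0⟩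
  have hbdd : BddAbove (Set.range s) := ⟨y, by rintro _ ⟨n, rfl⟩; exact hb n⟩
  set L := sSup (Set.range s) with hL
  have hstep : ∀ n, f (s n) = s (n + 1) := by
    intro n; simp only [hs, pow_succ' f n, Equiv.Perm.mul_apply]
  have hinv : ∀ n, s n ≤ f⁻¹ L := by
    intro n
    have h1 : f (s n) ≤ L := by
      rw [hstep n]; exact le_csSup hbdd (Set.mem_range_self _)
    have := (hmono _ (inv_mem hfG)).monotone h1
    rwa [show ∀ y, f⁻¹ (f y) = y from Equiv.symm_apply_apply f] at this
  have hLle : L ≤ f⁻¹ L := csSup_le hne (by rintro _ ⟨n, rfl⟩; exact hinv n)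
  have : f L ≤ f (f⁻¹ L) := (hmono f hfG).monotone hLle
  rw [show ∀ y, f (f⁻¹ y) = y from Equiv.apply_symm_apply f] at this
  exact absurd this (not_le.mpr (hf L))

/-- orbits of positive elements are unbounded below too -/
theorem orbit_unbdd_below (hmono : ∀ g ∈ G, StrictMono ⇑g)
    {f : Equiv.Perm ℝ} (hfG : f ∈ G) (hf : ∀ x, x < f x) (y : ℝ) :
    ∃ n : ℕ, (f⁻¹ ^ n) 0 < y := by
  have hf' : ∀ x, f⁻¹ x < x := by
    intro x
    have := hf (f⁻¹ x)
    rwa [show ∀ y, f (f⁻¹ y) = y from Equiv.apply_symm_apply f] at this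
  by_contra hb
  push_neg at hb
  set s : ℕ → ℝ := fun n => (f⁻¹ ^ n) 0 with hs
  have hne : (Set.range s).Nonempty := ⟨s 0, Set.mem_range_self 0⟩
  have hbdd : BddBelow (Set.range s) := ⟨y, by rintro _ ⟨n, rfl⟩; exact hb n⟩
  set L := sInf (Set.range s) with hL
  have hstep : ∀ n, f⁻¹ (s n) = s (n + 1) := by
    intro n; simp only [hs, pow_succ' f⁻¹ n, Equiv.Perm.mul_apply]
  have hinv : ∀ n, f L ≤ s n := by
    intro n
    have h1 : L ≤ f⁻¹ (s n) := by
      rw [hstep n]; exact csInf_le hbdd (Set.mem_range_self _)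
    have := (hmono f hfG).monotone h1
    rwa [show ∀ y, f (f⁻¹ y) = y from Equiv.apply_symm_apply f] at this
  have hLle : f L ≤ L := le_csInf hne (by rintro _ ⟨n, rfl⟩; exact hinv n)
  exact absurd hLle (not_le.mpr (hf L))

/-- the orbit map m ↦ f^m 0 is strictly monotone (integer powers) -/
theorem fpt_strictMono (hmono : ∀ g ∈ G, StrictMono ⇑g)
    {f : Equiv.Perm ℝ} (hfG : f ∈ G) (hf : ∀ x, x < f x) :
    StrictMono (fun m : ℤ => (f ^ m) 0) := by
  apply strictMono_int_of_lt_succ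
  intro m
  have : (f ^ (m + 1)) 0 = f ((f ^ m) 0) := by
    rw [add_comm, zpow_one_add f m, Equiv.Perm.mul_apply]
  rw [this]
  exact hf _

/-- the greatest integer m with f^m 0 ≤ y, junk value if none -/
noncomputable def Mgr (f : Equiv.Perm ℝ) (y : ℝ) : ℤ :=
  open Classical in
  if h : ∃ lb : ℤ, ((f ^ lb) 0 ≤ y) ∧ ∀ z : ℤ, (f ^ z) 0 ≤ y → z ≤ lb then h.choose else 0

theorem Mgr_spec (hmono : ∀ g ∈ G, StrictMono ⇑g)
    {f : Equiv.Perm ℝ} (hfG : f ∈ G) (hf : ∀ x, x < f x) (y : ℝ) :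
    (f ^ (Mgr f y)) 0 ≤ y ∧ ∀ z : ℤ, (f ^ z) 0 ≤ y → z ≤ Mgr f y := by
  classical
  have hex : ∃ lb : ℤ, ((f ^ lb) 0 ≤ y) ∧ ∀ z : ℤ, (f ^ z) 0 ≤ y → z ≤ lb := by
    apply Int.exists_greatest_of_bdd
    · obtain ⟨n, hn⟩ := orbit_unbdd hmono hfG hf y
      refine ⟨n, fun z hz => ?_⟩
      by_contra hzn
      push_neg at hzn
      have : (f ^ (n:ℤ)) 0 ≤ (f ^ z) 0 := ((fpt_strictMono hmono hfG hf).monotone (le_of_lt hzn))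
      rw [zpow_natCast] at this
      linarith [hz, hn, this]
    · obtain ⟨n, hn⟩ := orbit_unbdd_below hmono hfG hf y
      refine ⟨-(n:ℤ), ?_⟩
      have : (f⁻¹ ^ n) 0 = (f ^ (-(n:ℤ))) 0 := by
        rw [inv_pow, ← zpow_natCast, ← zpow_neg]
      rw [← this]
      exact le_of_lt hn
  rw [Mgr, dif_pos hex]
  exact hex.choose_spec


noncomputable def Afn (f g : Equiv.Perm ℝ) : ℝ :=
  sSup (Set.range fun n : ℕ => ((Mgr f ((g ^ (n+1)) 0) : ℝ)) / (n+1))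

section specs
variable (hmono : ∀ g ∈ G, StrictMono ⇑g)
    {f : Equiv.Perm ℝ} (hfG : f ∈ G) (hf : ∀ x, x < f x)
include hmono hfG hf

theorem Mgr_le (y : ℝ) : (f ^ (Mgr f y)) 0 ≤ y := (Mgr_spec hmono hfG hf y).1

theorem Mgr_ge_of {y : ℝ} {m : ℤ} (hm : (f ^ m) 0 ≤ y) : m ≤ Mgr f y :=
  (Mgr_spec hmono hfG hf y).2 m hm

theorem Mgr_lt (y : ℝ) : y < (f ^ (Mgr f y + 1)) 0 := by
  by_contra hc
  push_neg at hc
  have := Mgr_ge_of hmono hfG hf hc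
  omega

theorem Mgr_lt_of {y : ℝ} {m : ℤ} (hm : y < (f ^ m) 0) : Mgr f y < m := by
  by_contra hc
  push_neg at hc
  have h1 : (f ^ m) 0 ≤ (f ^ (Mgr f y)) 0 :=
    (fpt_strictMono hmono hfG hf).monotone hc
  have h2 := Mgr_le hmono hfG hf y
  linarith

theorem Mgr_mono {y y' : ℝ} (h : y ≤ y') : Mgr f y ≤ Mgr f y' :=
  Mgr_ge_of hmono hfG hf ((Mgr_le hmono hfG hf y).trans h)

end specs

section main
variable (hfree : ∀ g ∈ G, g ≠ 1 → ∀ x : ℝ, g x ≠ x)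
    (hcont : ∀ g ∈ G, Continuous ⇑g ∧ Continuous ⇑g.symm)
    (hmono : ∀ g ∈ G, StrictMono ⇑g)
    {f : Equiv.Perm ℝ} (hfG : f ∈ G) (hf : ∀ x, x < f x)
include hfree hcont hmono hfG hf

theorem m_mul_ge {g : Equiv.Perm ℝ} (hg : g ∈ G) (a b : ℕ) :
    Mgr f ((g ^ a) 0) * b ≤ Mgr f ((g ^ (a*b)) 0) := by
  set m := Mgr f ((g ^ a) 0) with hm
  have h1 : (f ^ m) 0 ≤ (g ^ a) 0 := Mgr_le hmono hfG hf _
  have hp : ∀ x, (f ^ m) x ≤ (g ^ a) x :=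
    le_ext hfree hcont (G.zpow_mem hfG m) (pow_mem hg a) h1
  have h2 : ∀ x, ((f ^ m) ^ b) x ≤ ((g ^ a) ^ b) x :=
    fun x => pow_le_pow hmono (G.zpow_mem hfG m) (pow_mem hg a) hp b x
  have h3 : ((f ^ m) ^ b) 0 = (f ^ (m * b)) 0 := by
    rw [← zpow_natCast (f ^ m) b, ← zpow_mul]
  have h4 : ((g ^ a) ^ b) = g ^ (a*b) := (pow_mul g a b).symm
  apply Mgr_ge_of hmono hfG hf
  rw [← h3]
  calc ((f ^ m) ^ b) 0 ≤ ((g ^ a) ^ b) 0 := h2 0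
    _ = (g ^ (a*b)) 0 := by rw [h4]

theorem m_mul_lt {g : Equiv.Perm ℝ} (hg : g ∈ G) (a : ℕ) {b : ℕ} (hb : 0 < b) :
    Mgr f ((g ^ (a*b)) 0) < (Mgr f ((g ^ a) 0) + 1) * b := by
  obtain ⟨b', rfl⟩ : ∃ b', b = b' + 1 := ⟨b - 1, by omega⟩
  set m := Mgr f ((g ^ a) 0) with hm
  have h1 : (g ^ a) 0 < (f ^ (m + 1)) 0 := Mgr_lt hmono hfG hf _
  have hp : ∀ x, (g ^ a) x ≤ (f ^ (m+1)) x :=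
    le_ext hfree hcont (pow_mem hg a) (G.zpow_mem hfG (m+1)) (le_of_lt h1)
  have h2 : ((g ^ a) ^ (b'+1)) 0 < ((f ^ (m+1)) ^ (b'+1)) 0 :=
    pow_lt_pow_at hmono (pow_mem hg a) (G.zpow_mem hfG (m+1)) hp h1 b'
  have h3 : ((f ^ (m+1)) ^ (b'+1)) 0 = (f ^ ((m+1) * ((b':ℤ)+1))) 0 := by
    rw [← zpow_natCast (f ^ (m+1)) (b'+1), ← zpow_mul]
    norm_num
  have h4 : (g ^ (a*(b'+1))) 0 < (f ^ ((m+1) * ((b':ℤ)+1))) 0 := by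
    rw [pow_mul g a (b'+1), ← h3]
    exact h2
  have h5 := Mgr_lt_of hmono hfG hf h4
  have hcast : ((b'+1 : ℕ) : ℤ) = (b' : ℤ) + 1 := by push_cast; ring
  rw [hcast]
  exact h5

theorem A_bddAbove {g : Equiv.Perm ℝ} (hg : g ∈ G) :
    BddAbove (Set.range fun n : ℕ => ((Mgr f ((g ^ (n+1)) 0) : ℝ)) / (n+1)) := by
  refine ⟨(Mgr f ((g ^ 1) 0) : ℝ) + 1, ?_⟩
  rintro _ ⟨n, rfl⟩
  have hint : Mgr f ((g ^ (1*(n+1))) 0) < (Mgr f ((g ^ 1) 0) + 1) * (n+1) :=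
    m_mul_lt hfree hcont hmono hfG hf hg 1 (Nat.succ_pos n)
  rw [one_mul] at hint
  have hr : (Mgr f ((g ^ (n+1)) 0) : ℝ) ≤ ((Mgr f ((g ^ 1) 0) : ℝ) + 1) * (n+1) := by
    exact_mod_cast le_of_lt hint
  have hpos : (0:ℝ) < (n+1:ℝ) := by positivity
  rw [div_le_iff₀ hpos]
  exact hr

theorem A_ge {g : Equiv.Perm ℝ} (hg : g ∈ G) (n : ℕ) :
    ((Mgr f ((g ^ (n+1)) 0) : ℝ)) / (n+1) ≤ Afn f g :=
  le_csSup (A_bddAbove hfree hcont hmono hfG hf hg) (Set.mem_range_self n)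

theorem A_le {g : Equiv.Perm ℝ} (hg : g ∈ G) (k : ℕ) :
    Afn f g ≤ ((Mgr f ((g ^ (k+1)) 0) : ℝ) + 1) / (k+1) := by
  apply csSup_le (Set.range_nonempty _)
  rintro _ ⟨n, rfl⟩
  have h1 : Mgr f ((g ^ (n+1)) 0) * (k+1) ≤ Mgr f ((g ^ ((n+1)*(k+1))) 0) :=
    m_mul_ge hfree hcont hmono hfG hf hg (n+1) (k+1)
  have h2 : Mgr f ((g ^ ((k+1)*(n+1))) 0) < (Mgr f ((g ^ (k+1)) 0) + 1) * (n+1) :=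
    m_mul_lt hfree hcont hmono hfG hf hg (k+1) (Nat.succ_pos n)
  rw [mul_comm (k+1) (n+1)] at h2
  have hint : Mgr f ((g ^ (n+1)) 0) * (k+1) ≤ (Mgr f ((g ^ (k+1)) 0) + 1) * (n+1) :=
    le_of_lt (lt_of_le_of_lt h1 h2)
  have hnpos : (0:ℝ) < (n+1:ℝ) := by positivity
  have hkpos : (0:ℝ) < (k+1:ℝ) := by positivity
  rw [div_le_div_iff₀ hnpos hkpos]
  exact_mod_cast hint


theorem mA_le_sum {g h : Equiv.Perm ℝ} (hg : g ∈ G) (hh : h ∈ G)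
    (hgh : ∀ x, (h*g) x ≤ (g*h) x) (n : ℕ) :
    Mgr f (((g*h) ^ (n+1)) 0) ≤ Mgr f ((g ^ (n+1)) 0) + Mgr f ((h ^ (n+1)) 0) + 1 := by
  set mg := Mgr f ((g ^ (n+1)) 0) with hmg
  set mh := Mgr f ((h ^ (n+1)) 0) with hmh
  have hc : ∀ x, h (g x) ≤ g (h x) := by
    intro x
    have := hgh x
    simpa [Equiv.Perm.mul_apply] using this
  have s2 : ((g*h) ^ (n+1)) 0 ≤ (g ^ (n+1)) ((h ^ (n+1)) 0) :=
    sort2 hmono hg hh hc (n+1) 0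
  have hlt : (h ^ (n+1)) 0 < (f ^ (mh+1)) 0 := Mgr_lt hmono hfG hf _
  have s3 : (g ^ (n+1)) ((h ^ (n+1)) 0) < (g ^ (n+1)) ((f ^ (mh+1)) 0) :=
    (hmono _ (pow_mem hg (n+1))) hlt
  have hple : ∀ x, (g ^ (n+1)) x ≤ (f ^ (mg+1)) x :=
    le_ext hfree hcont (pow_mem hg (n+1)) (G.zpow_mem hfG (mg+1))
      (le_of_lt (Mgr_lt hmono hfG hf _))
  have s4 : (g ^ (n+1)) ((f ^ (mh+1)) 0) ≤ (f ^ (mg+1)) ((f ^ (mh+1)) 0) := hple _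
  have s5 : (f ^ (mg+1)) ((f ^ (mh+1)) 0) = (f ^ (mg+mh+2)) 0 := by
    rw [← Equiv.Perm.mul_apply, ← zpow_add]
    ring_nf
  have hfin : ((g*h) ^ (n+1)) 0 < (f ^ (mg+mh+2)) 0 := by
    calc ((g*h) ^ (n+1)) 0 ≤ (g ^ (n+1)) ((h ^ (n+1)) 0) := s2
      _ < (g ^ (n+1)) ((f ^ (mh+1)) 0) := s3
      _ ≤ (f ^ (mg+1)) ((f ^ (mh+1)) 0) := s4
      _ = (f ^ (mg+mh+2)) 0 := s5
  have := Mgr_lt_of hmono hfG hf hfin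
  omega

theorem mA_ge_sum {g h : Equiv.Perm ℝ} (hg : g ∈ G) (hh : h ∈ G)
    (hgh : ∀ x, (h*g) x ≤ (g*h) x) (n : ℕ) :
    Mgr f ((g ^ (n+1)) 0) + Mgr f ((h ^ (n+1)) 0) ≤ Mgr f (((h*g) ^ (n+1)) 0) := by
  set mg := Mgr f ((g ^ (n+1)) 0) with hmg
  set mh := Mgr f ((h ^ (n+1)) 0) with hmh
  have hc : ∀ x, h (g x) ≤ g (h x) := by
    intro x
    have := hgh x
    simpa [Equiv.Perm.mul_apply] using this
  have s1 : (f ^ (mg+mh)) 0 = (f ^ mh) ((f ^ mg) 0) := by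
    rw [← Equiv.Perm.mul_apply, ← zpow_add]
    ring_nf
  have s2 : (f ^ mh) ((f ^ mg) 0) ≤ (f ^ mh) ((g ^ (n+1)) 0) :=
    (hmono _ (G.zpow_mem hfG mh)).monotone (Mgr_le hmono hfG hf _)
  have s3 : (f ^ mh) ((g ^ (n+1)) 0) ≤ (h ^ (n+1)) ((g ^ (n+1)) 0) :=
    le_ext hfree hcont (G.zpow_mem hfG mh) (pow_mem hh (n+1))
      (Mgr_le hmono hfG hf _) _
  have s4 : (h ^ (n+1)) ((g ^ (n+1)) 0) ≤ ((h*g) ^ (n+1)) 0 :=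
    sort3 hmono hg hh hc (n+1) 0
  apply Mgr_ge_of hmono hfG hf
  calc (f ^ (mg+mh)) 0 = (f ^ mh) ((f ^ mg) 0) := s1
    _ ≤ (f ^ mh) ((g ^ (n+1)) 0) := s2
    _ ≤ (h ^ (n+1)) ((g ^ (n+1)) 0) := s3
    _ ≤ ((h*g) ^ (n+1)) 0 := s4

theorem A_add_of {g h : Equiv.Perm ℝ} (hg : g ∈ G) (hh : h ∈ G)
    (hgh : ∀ x, (h*g) x ≤ (g*h) x) :
    Afn f (g*h) = Afn f g + Afn f h ∧ Afn f (h*g) = Afn f g + Afn f h := by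
  have hghG : g*h ∈ G := mul_mem hg hh
  have hhgG : h*g ∈ G := mul_mem hh hg
  have upper : Afn f (g*h) ≤ Afn f g + Afn f h := by
    apply le_of_forall_pos_le_add
    intro ε hε
    obtain ⟨n, hn⟩ := exists_nat_gt (2/ε)
    have hnpos : (0:ℝ) < (n+1:ℝ) := by positivity
    have heps : 2/(n+1:ℝ) ≤ ε := by
      rw [div_le_iff₀ hnpos]
      rw [div_lt_iff₀ hε] at hn
      nlinarith
    have h1 : Afn f (g*h) ≤ ((Mgr f (((g*h) ^ (n+1)) 0) : ℝ) + 1)/(n+1) :=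
      A_le hfree hcont hmono hfG hf hghG n
    have h2 : (Mgr f (((g*h) ^ (n+1)) 0) : ℝ)
        ≤ (Mgr f ((g ^ (n+1)) 0) : ℝ) + (Mgr f ((h ^ (n+1)) 0) : ℝ) + 1 := by
      exact_mod_cast mA_le_sum hfree hcont hmono hfG hf hg hh hgh n
    have h3 : (Mgr f ((g ^ (n+1)) 0) : ℝ)/(n+1) ≤ Afn f g :=
      A_ge hfree hcont hmono hfG hf hg n
    have h4 : (Mgr f ((h ^ (n+1)) 0) : ℝ)/(n+1) ≤ Afn f h :=
      A_ge hfree hcont hmono hfG hf hh n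
    calc Afn f (g*h) ≤ ((Mgr f (((g*h) ^ (n+1)) 0) : ℝ) + 1)/(n+1) := h1
      _ ≤ ((Mgr f ((g ^ (n+1)) 0) : ℝ) + (Mgr f ((h ^ (n+1)) 0) : ℝ) + 2)/(n+1) := by
          rw [div_le_div_iff₀ hnpos hnpos]
          nlinarith
      _ = (Mgr f ((g ^ (n+1)) 0) : ℝ)/(n+1) + (Mgr f ((h ^ (n+1)) 0) : ℝ)/(n+1) + 2/(n+1) := by
          ring
      _ ≤ Afn f g + Afn f h + ε := by linarith
  have lower : Afn f g + Afn f h ≤ Afn f (h*g) := by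
    apply le_of_forall_pos_le_add
    intro ε hε
    obtain ⟨n, hn⟩ := exists_nat_gt (2/ε)
    have hnpos : (0:ℝ) < (n+1:ℝ) := by positivity
    have heps : 2/(n+1:ℝ) ≤ ε := by
      rw [div_le_iff₀ hnpos]
      rw [div_lt_iff₀ hε] at hn
      nlinarith
    have h1 : Afn f g ≤ ((Mgr f ((g ^ (n+1)) 0) : ℝ) + 1)/(n+1) :=
      A_le hfree hcont hmono hfG hf hg n
    have h2 : Afn f h ≤ ((Mgr f ((h ^ (n+1)) 0) : ℝ) + 1)/(n+1) :=
      A_le hfree hcont hmono hfG hf hh n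
    have h3 : (Mgr f ((g ^ (n+1)) 0) : ℝ) + (Mgr f ((h ^ (n+1)) 0) : ℝ)
        ≤ (Mgr f (((h*g) ^ (n+1)) 0) : ℝ) := by
      exact_mod_cast mA_ge_sum hfree hcont hmono hfG hf hg hh hgh n
    have h4 : (Mgr f (((h*g) ^ (n+1)) 0) : ℝ)/(n+1) ≤ Afn f (h*g) :=
      A_ge hfree hcont hmono hfG hf hhgG n
    have h5 : ((Mgr f ((g ^ (n+1)) 0) : ℝ) + (Mgr f ((h ^ (n+1)) 0) : ℝ))/(n+1)
        ≤ Afn f (h*g) := by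
      refine le_trans ?_ h4
      rw [div_le_div_iff₀ hnpos hnpos]
      nlinarith
    calc Afn f g + Afn f h
        ≤ ((Mgr f ((g ^ (n+1)) 0) : ℝ) + 1)/(n+1) + ((Mgr f ((h ^ (n+1)) 0) : ℝ) + 1)/(n+1) := by
          linarith
      _ = ((Mgr f ((g ^ (n+1)) 0) : ℝ) + (Mgr f ((h ^ (n+1)) 0) : ℝ))/(n+1) + 2/(n+1) := by
          ring
      _ ≤ Afn f (h*g) + ε := by linarith
  have mid : Afn f (h*g) ≤ Afn f (g*h) := by
    apply csSup_le (Set.range_nonempty _)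
    rintro _ ⟨n, rfl⟩
    have h1 : Mgr f (((h*g) ^ (n+1)) 0) ≤ Mgr f (((g*h) ^ (n+1)) 0) :=
      Mgr_mono hmono hfG hf (pow_le_pow hmono hhgG hghG hgh (n+1) 0)
    have hnpos : (0:ℝ) < (n+1:ℝ) := by positivity
    have h2 : (Mgr f (((h*g) ^ (n+1)) 0) : ℝ)/(n+1) ≤ (Mgr f (((g*h) ^ (n+1)) 0) : ℝ)/(n+1) := by
      rw [div_le_div_iff₀ hnpos hnpos]
      have : (Mgr f (((h*g) ^ (n+1)) 0) : ℝ) ≤ (Mgr f (((g*h) ^ (n+1)) 0) : ℝ) := by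
        exact_mod_cast h1
      nlinarith
    exact h2.trans (A_ge hfree hcont hmono hfG hf hghG n)
  constructor
  · linarith
  · linarith

theorem A_add {g h : Equiv.Perm ℝ} (hg : g ∈ G) (hh : h ∈ G) :
    Afn f (g*h) = Afn f g + Afn f h := by
  rcases total hfree hcont (mul_mem hh hg) (mul_mem hg hh) with H | H
  · exact (A_add_of hfree hcont hmono hfG hf hg hh H).1
  · have := (A_add_of hfree hcont hmono hfG hf hh hg H).2
    rw [this, add_comm]

theorem A_one : Afn f 1 = 0 := by
  have hm : ∀ n : ℕ, Mgr f (((1:Equiv.Perm ℝ) ^ (n+1)) 0) = 0 := by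
    intro n
    have h0 : (((1:Equiv.Perm ℝ) ^ (n+1)) 0) = (0:ℝ) := by simp
    rw [h0]
    apply le_antisymm
    · have h1 : (0:ℝ) < (f ^ (1:ℤ)) 0 := by
        rw [zpow_one]; exact hf 0
      have := Mgr_lt_of hmono hfG hf h1
      omega
    · exact Mgr_ge_of hmono hfG hf (m := 0) (by simp)
  have hfun : (fun n : ℕ => ((Mgr f (((1:Equiv.Perm ℝ) ^ (n+1)) 0) : ℝ)) / (n+1))
      = fun _ : ℕ => (0:ℝ) := by
    funext n
    rw [hm n]
    simp
  rw [Afn, hfun, Set.range_const, csSup_singleton]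

theorem A_self_ge_one : 1 ≤ Afn f f := by
  have h1 : (1:ℤ) ≤ Mgr f ((f ^ (0+1)) 0) := by
    apply Mgr_ge_of hmono hfG hf
    rw [zpow_one]
    simp
  have h2 := A_ge hfree hcont hmono hfG hf hfG 0
  have hc : (1:ℝ) ≤ (Mgr f ((f ^ (0+1)) 0) : ℝ) := by exact_mod_cast h1
  norm_num at h2 hc
  linarith

theorem A_inv {g : Equiv.Perm ℝ} (hg : g ∈ G) : Afn f g⁻¹ = - Afn f g := by
  have h1 := A_add hfree hcont hmono hfG hf (inv_mem hg) hg
  rw [inv_mul_cancel] at h1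
  rw [A_one hfree hcont hmono hfG hf] at h1
  linarith

theorem A_comm_zero {a b : Equiv.Perm ℝ} (ha : a ∈ G) (hb : b ∈ G) :
    Afn f (a * b * a⁻¹ * b⁻¹) = 0 := by
  have h1 := A_add hfree hcont hmono hfG hf (mul_mem (mul_mem ha hb) (inv_mem ha)) (inv_mem hb)
  have h2 := A_add hfree hcont hmono hfG hf (mul_mem ha hb) (inv_mem ha)
  have h3 := A_add hfree hcont hmono hfG hf ha hb
  have h4 := A_inv hfree hcont hmono hfG hf ha
  have h5 := A_inv hfree hcont hmono hfG hf hb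
  rw [h1, h2, h3, h4, h5]
  ring

end main

end HolderAux

/-- Hölder's theorem for the line: a group of orientation-preserving homeomorphisms of ℝ
acting freely is abelian. -/
theorem holder_abelian (G : Subgroup (Equiv.Perm ℝ))
    (hcont : ∀ g ∈ G, Continuous ⇑g ∧ Continuous ⇑g.symm)
    (hmono : ∀ g ∈ G, StrictMono ⇑g)
    (hfree : ∀ g ∈ G, g ≠ 1 → ∀ x : ℝ, g x ≠ x) :
    ∀ a ∈ G, ∀ b ∈ G, a * b = b * a := by
  intro a ha b hb
  by_contra hab
  have hcG : a * b * a⁻¹ * b⁻¹ ∈ G :=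
    mul_mem (mul_mem (mul_mem ha hb) (inv_mem ha)) (inv_mem hb)
  have hcne : a * b * a⁻¹ * b⁻¹ ≠ 1 := by
    intro h
    exact hab (commutatorElement_eq_one_iff_mul_comm.mp (by rw [commutatorElement_def]; exact h))
  have hc0 : (a * b * a⁻¹ * b⁻¹) 0 ≠ 0 := hfree _ hcG hcne 0
  rcases hc0.lt_or_gt with hneg | hpos
  · have hinvpos : (0:ℝ) < (a * b * a⁻¹ * b⁻¹)⁻¹ 0 := by
      have hm := hmono _ (inv_mem hcG)
      have h2 := hm hneg
      rwa [show ∀ y, (a * b * a⁻¹ * b⁻¹)⁻¹ ((a * b * a⁻¹ * b⁻¹) y) = y from Equiv.symm_apply_apply _] at h2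
    have hf : ∀ x, x < (a * b * a⁻¹ * b⁻¹)⁻¹ x :=
      HolderAux.pos_everywhere hfree hcont (inv_mem hcG) hinvpos
    have h0 : HolderAux.Afn (a * b * a⁻¹ * b⁻¹)⁻¹ (a * b * a⁻¹ * b⁻¹) = 0 :=
      HolderAux.A_comm_zero hfree hcont hmono (inv_mem hcG) hf ha hb
    have hinv : HolderAux.Afn (a * b * a⁻¹ * b⁻¹)⁻¹ (a * b * a⁻¹ * b⁻¹)⁻¹ = 0 := by
      rw [HolderAux.A_inv hfree hcont hmono (inv_mem hcG) hf hcG, h0]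
      ring
    have hge := HolderAux.A_self_ge_one hfree hcont hmono (inv_mem hcG) hf
    linarith
  · have hf : ∀ x, x < (a * b * a⁻¹ * b⁻¹) x :=
      HolderAux.pos_everywhere hfree hcont hcG hpos
    have h0 : HolderAux.Afn (a * b * a⁻¹ * b⁻¹) (a * b * a⁻¹ * b⁻¹) = 0 :=
      HolderAux.A_comm_zero hfree hcont hmono hcG hf ha hb
    have hge := HolderAux.A_self_ge_one hfree hcont hmono hcG hf
    linarith
end

section
/- Let g and h be commuting C² diffeomorphisms of the half-open interval [0,1). If g has no fixed point in (0,1) and h is not the identity, then h has no fixed point in (0,1). -/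
/-- A model for an orientation-preserving C^r diffeomorphism of the half-open
interval [0,1): a permutation of ℝ that is the identity outside [0,1), restricts to a
C^r monotone bijection of [0,1) with C^r inverse. -/
def IsIcoDiff (r : ℕ∞) (g : Equiv.Perm ℝ) : Prop :=
  ContDiffOn ℝ r ⇑g (Set.Ico 0 1) ∧ ContDiffOn ℝ r ⇑g.symm (Set.Ico 0 1) ∧
  Set.BijOn ⇑g (Set.Ico 0 1) (Set.Ico 0 1) ∧ StrictMonoOn ⇑g (Set.Ico 0 1) ∧
  ∀ x : ℝ, x ∉ Set.Ico (0:ℝ) 1 → g x = x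

open Set Filter Topology

namespace Kopell

variable {g h : Equiv.Perm ℝ} {f : ℝ → ℝ}

lemma mapsTo (hg : IsIcoDiff 2 g) : MapsTo ⇑g (Ico 0 1) (Ico 0 1) := hg.2.2.1.mapsTo

lemma map_zero (hg : IsIcoDiff 2 g) : g 0 = 0 := by
  obtain ⟨x, hx, hgx⟩ := hg.2.2.1.surjOn (show (0:ℝ) ∈ Ico 0 1 by simp)
  rcases eq_or_lt_of_le hx.1 with h0 | h0
  · rw [← h0] at hgx; exact hgx
  · have h1 : g 0 < g x := hg.2.2.2.1 (by simp) hx h0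
    have := (mapsTo hg (show (0:ℝ) ∈ Ico 0 1 by simp)).1
    rw [hgx] at h1; linarith

lemma maps_Ioo (hg : IsIcoDiff 2 g) {x : ℝ} (hx : x ∈ Ioo 0 1) : g x ∈ Ioo 0 1 := by
  have h1 := mapsTo hg (show x ∈ Ico 0 1 from ⟨hx.1.le, hx.2⟩)
  have h2 : g 0 < g x := hg.2.2.2.1 (by simp) ⟨hx.1.le, hx.2⟩ hx.1
  rw [map_zero hg] at h2
  exact ⟨h2, h1.2⟩

lemma symm_mapsTo (hg : IsIcoDiff 2 g) : MapsTo ⇑g.symm (Ico 0 1) (Ico 0 1) := by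
  intro y hy
  obtain ⟨x, hx, hgx⟩ := hg.2.2.1.surjOn hy
  have : g.symm y = x := by rw [← hgx]; exact g.symm_apply_apply x
  rwa [this]

lemma inv_isIcoDiff (hg : IsIcoDiff 2 g) : IsIcoDiff 2 g⁻¹ := by
  have hco : ⇑(g⁻¹) = ⇑g.symm := rfl
  have hsymm : ⇑(g⁻¹).symm = ⇑g := rfl
  refine ⟨by rw [hco]; exact hg.2.1, by rw [hsymm]; exact hg.1, ?_, ?_, ?_⟩
  · rw [hco]
    refine ⟨symm_mapsTo hg, ?_, ?_⟩
    · exact fun x _ y _ hxy => g.symm.injective hxy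
    · intro y hy
      exact ⟨g y, mapsTo hg hy, g.symm_apply_apply y⟩
  · rw [hco]
    intro x hx y hy hxy
    by_contra hle
    push_neg at hle
    have := hg.2.2.2.1.monotoneOn (symm_mapsTo hg hy) (symm_mapsTo hg hx) hle
    rw [g.apply_symm_apply, g.apply_symm_apply] at this
    linarith
  · intro x hx
    have := hg.2.2.2.2 x hx
    rw [hco]
    calc g.symm x = g.symm (g x) := by rw [this]
    _ = x := g.symm_apply_apply x

lemma contract_or_expand (hg : IsIcoDiff 2 g)
    (hgfree : ∀ x ∈ Ioo (0:ℝ) 1, g x ≠ x) :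
    (∀ x ∈ Ioo (0:ℝ) 1, g x < x) ∨ (∀ x ∈ Ioo (0:ℝ) 1, x < g x) := by
  by_contra hcon
  push_neg at hcon
  obtain ⟨⟨x, hx, hxle⟩, ⟨y, hy, hyle⟩⟩ := hcon
  have hxne := hgfree x hx
  have hyne := hgfree y hy
  have hxgt : x < g x := lt_of_le_of_ne hxle (Ne.symm hxne)
  have hylt : g y < y := lt_of_le_of_ne hyle hyne
  -- wlog-type case analysis on x vs y; use IVT on f = g - id
  have key : ∀ u v : ℝ, u ∈ Ioo (0:ℝ) 1 → v ∈ Ioo (0:ℝ) 1 → u < v →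
      u < g u → g v < v → False := by
    intro u v hu hv huv h1 h2
    have hcont : ContinuousOn (fun t => g t - t) (Icc u v) := by
      apply ContinuousOn.sub _ continuousOn_id
      exact (hg.1.continuousOn).mono (fun t ht => ⟨le_trans hu.1.le ht.1, lt_of_le_of_lt ht.2 hv.2⟩)
    have h0 : (0:ℝ) ∈ Icc ((fun t => g t - t) v) ((fun t => g t - t) u) := by
      constructor <;> simp <;> linarith
    obtain ⟨c, hc, hc0⟩ := intermediate_value_Icc' huv.le hcont h0
    have hcIoo : c ∈ Ioo (0:ℝ) 1 := ⟨lt_of_lt_of_le hu.1 hc.1, lt_of_le_of_lt hc.2 hv.2⟩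
    exact hgfree c hcIoo (by simpa [sub_eq_zero] using hc0)
  rcases lt_trichotomy x y with hxy | hxy | hxy
  · exact key x y hx hy hxy hxgt hylt
  · rw [hxy] at hxgt; linarith
  · -- y < x, g y < y, x < g x : need a fixed point in between too
    -- f y < 0 < f x with y < x : IVT increasing direction
    have hcont : ContinuousOn (fun t => g t - t) (Icc y x) := by
      apply ContinuousOn.sub _ continuousOn_id
      exact (hg.1.continuousOn).mono (fun t ht => ⟨le_trans hy.1.le ht.1, lt_of_le_of_lt ht.2 hx.2⟩)
    have h0 : (0:ℝ) ∈ Icc ((fun t => g t - t) y) ((fun t => g t - t) x) := by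
      constructor <;> simp <;> linarith
    obtain ⟨c, hc, hc0⟩ := intermediate_value_Icc hxy.le hcont h0
    have hcIoo : c ∈ Ioo (0:ℝ) 1 := ⟨lt_of_lt_of_le hy.1 hc.1, lt_of_le_of_lt hc.2 hx.2⟩
    exact hgfree c hcIoo (by simpa [sub_eq_zero] using hc0)

lemma iter_mem_Ioo (hg : IsIcoDiff 2 g) {x : ℝ} (hx : x ∈ Ioo (0:ℝ) 1) (n : ℕ) :
    (⇑g)^[n] x ∈ Ioo (0:ℝ) 1 := by
  induction n with
  | zero => simpa using hx
  | succ n ih => rw [Function.iterate_succ_apply']; exact maps_Ioo hg ih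

lemma iter_mem_Ico (hg : IsIcoDiff 2 g) {x : ℝ} (hx : x ∈ Ico (0:ℝ) 1) (n : ℕ) :
    (⇑g)^[n] x ∈ Ico (0:ℝ) 1 := by
  induction n with
  | zero => simpa using hx
  | succ n ih => rw [Function.iterate_succ_apply']; exact mapsTo hg ih

lemma iter_strictMonoOn (hg : IsIcoDiff 2 g) (n : ℕ) :
    StrictMonoOn ((⇑g)^[n]) (Ico (0:ℝ) 1) := by
  induction n with
  | zero => simpa using strictMonoOn_id
  | succ n ih =>
    intro x hx y hy hxy
    rw [Function.iterate_succ_apply', Function.iterate_succ_apply']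
    exact hg.2.2.2.1 (iter_mem_Ico hg hx n) (iter_mem_Ico hg hy n) (ih hx hy hxy)

lemma iter_tendsto_zero (hg : IsIcoDiff 2 g) (hcon : ∀ x ∈ Ioo (0:ℝ) 1, g x < x)
    {x : ℝ} (hx : x ∈ Ioo (0:ℝ) 1) :
    Tendsto (fun n => (⇑g)^[n] x) atTop (𝓝 0) := by
  have hanti : StrictAnti (fun n => (⇑g)^[n] x) := by
    apply strictAnti_nat_of_succ_lt
    intro n
    rw [Function.iterate_succ_apply']
    exact hcon _ (iter_mem_Ioo hg hx n)
  have hbdd : BddBelow (range fun n => (⇑g)^[n] x) := by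
    refine ⟨0, ?_⟩
    rintro y ⟨n, rfl⟩
    exact (iter_mem_Ioo hg hx n).1.le
  have htend := tendsto_atTop_ciInf hanti.antitone hbdd
  set L := ⨅ n, (⇑g)^[n] x with hL
  have hL0 : 0 ≤ L := le_ciInf fun n => (iter_mem_Ioo hg hx n).1.le
  have hL1 : L < 1 := lt_of_le_of_lt (ciInf_le hbdd 0) (by simpa using hx.2)
  have hLfix : g L = L := by
    have hcw : ContinuousWithinAt ⇑g (Ico 0 1) L :=
      (hg.1.continuousOn).continuousWithinAt (show L ∈ Ico (0:ℝ) 1 from ⟨hL0, hL1⟩)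
    have hmem : ∀ n, (⇑g)^[n] x ∈ Ico (0:ℝ) 1 := fun n =>
      iter_mem_Ico hg ⟨hx.1.le, hx.2⟩ n
    have h1 : Tendsto (fun n => g ((⇑g)^[n] x)) atTop (𝓝 (g L)) :=
      hcw.tendsto.comp (tendsto_nhdsWithin_iff.2 ⟨htend, Eventually.of_forall hmem⟩)
    have h2 : Tendsto (fun n => g ((⇑g)^[n] x)) atTop (𝓝 L) := by
      have : (fun n => g ((⇑g)^[n] x)) = fun n => (⇑g)^[n+1] x := by
        funext n; rw [Function.iterate_succ_apply']
      rw [this]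
      exact htend.comp (tendsto_add_atTop_nat 1)
    exact tendsto_nhds_unique h1 h2
  have : L = 0 := by
    rcases eq_or_lt_of_le hL0 with h0 | h0
    · exact h0.symm
    · exact absurd hLfix (ne_of_lt (hcon L ⟨h0, hL1⟩))
  rwa [this] at htend

/-- The (one-sided) derivative function. -/
noncomputable def D (f : ℝ → ℝ) : ℝ → ℝ := derivWithin f (Ico 0 1)

variable {f : ℝ → ℝ}

lemma contDiffOn_one (hC : ContDiffOn ℝ 2 f (Ico (0:ℝ) 1)) : ContDiffOn ℝ 1 f (Ico (0:ℝ) 1) :=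
  hC.of_le (by norm_num)

lemma hasDerivWithinAt (hC : ContDiffOn ℝ 2 f (Ico (0:ℝ) 1)) {x : ℝ} (hx : x ∈ Ico (0:ℝ) 1) :
    HasDerivWithinAt f (D f x) (Ico 0 1) x :=
  (((contDiffOn_one hC).differentiableOn one_ne_zero) x hx).hasDerivWithinAt

lemma ico_mem_nhds {x : ℝ} (hx : x ∈ Ioo (0:ℝ) 1) : Ico (0:ℝ) 1 ∈ 𝓝 x :=
  mem_nhds_iff.2 ⟨Ioo 0 1, Ioo_subset_Ico_self, isOpen_Ioo, hx⟩

lemma hasDerivAt (hC : ContDiffOn ℝ 2 f (Ico (0:ℝ) 1)) {x : ℝ} (hx : x ∈ Ioo (0:ℝ) 1) :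
    HasDerivAt f (D f x) x :=
  (hasDerivWithinAt hC ⟨hx.1.le, hx.2⟩).hasDerivAt (ico_mem_nhds hx)

lemma slope_filter_neBot {x : ℝ} (hx : x ∈ Ico (0:ℝ) 1) :
    (𝓝[Ico (0:ℝ) 1 \ {x}] x).NeBot := by
  have hsub : Ioo x 1 ⊆ Ico (0:ℝ) 1 \ {x} := by
    intro y hy
    exact ⟨⟨le_trans hx.1 hy.1.le, hy.2⟩, ne_of_gt hy.1⟩
  have : (𝓝[Ioo x 1] x).NeBot := left_nhdsWithin_Ioo_neBot hx.2
  exact this.mono (nhdsWithin_mono x hsub)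

lemma deriv_pos (hg : IsIcoDiff 2 g) {x : ℝ} (hx : x ∈ Ico (0:ℝ) 1) : 0 < D ⇑g x := by
  have hne : D ⇑g x ≠ 0 := by
    intro h0
    -- chain rule: g.symm ∘ g = id
    have h1 : HasDerivWithinAt ⇑g (D ⇑g x) (Ico 0 1) x := hasDerivWithinAt hg.1 hx
    have hgx := mapsTo hg hx
    have h2 : HasDerivWithinAt ⇑g.symm (D ⇑g.symm (g x)) (Ico 0 1) (g x) :=
      hasDerivWithinAt hg.2.1 hgx
    have h3 : HasDerivWithinAt (⇑g.symm ∘ ⇑g) (D ⇑g.symm (g x) * D ⇑g x) (Ico 0 1) x :=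
      h2.comp x h1 (mapsTo hg)
    have h4 : (⇑g.symm ∘ ⇑g) = id := by funext y; simp
    rw [h4] at h3
    have h5 : HasDerivWithinAt (id : ℝ → ℝ) 1 (Ico 0 1) x := hasDerivWithinAt_id x _
    have hu := uniqueDiffOn_Ico (0:ℝ) 1 x hx
    have e1 := h3.derivWithin hu
    have e2 := h5.derivWithin hu
    rw [e2] at e1
    rw [h0, mul_zero] at e1
    norm_num at e1
  have hnn : 0 ≤ D ⇑g x := by
    have h1 : HasDerivWithinAt ⇑g (D ⇑g x) (Ico 0 1) x := hasDerivWithinAt hg.1 hx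
    have h2 := hasDerivWithinAt_iff_tendsto_slope.1 h1
    have : (𝓝[Ico (0:ℝ) 1 \ {x}] x).NeBot := slope_filter_neBot hx
    refine ge_of_tendsto h2 ?_
    filter_upwards [self_mem_nhdsWithin] with y hy
    rcases hy with ⟨hy1, hy2⟩
    have hyne : y ≠ x := hy2
    rcases lt_or_gt_of_ne hyne with hlt | hgt
    · have := hg.2.2.2.1 hy1 hx hlt
      rw [slope_def_field, div_nonneg_iff]
      right; constructor <;> linarith
    · have := hg.2.2.2.1 hx hy1 hgt
      rw [slope_def_field, div_nonneg_iff]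
      left; constructor <;> linarith
  exact lt_of_le_of_ne hnn (Ne.symm hne)

lemma deriv_continuousOn (hC : ContDiffOn ℝ 2 f (Ico (0:ℝ) 1)) :
    ContinuousOn (D f) (Ico (0:ℝ) 1) :=
  hC.continuousOn_derivWithin (uniqueDiffOn_Ico 0 1) (by norm_num)

lemma deriv_lipschitz (hC : ContDiffOn ℝ 2 f (Ico (0:ℝ) 1)) {b : ℝ} (hb : b ∈ Ioo (0:ℝ) 1) :
    ∃ C : ℝ, 0 ≤ C ∧ ∀ x ∈ Icc (0:ℝ) b, ∀ y ∈ Icc (0:ℝ) b, |D f x - D f y| ≤ C * |x - y| := by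
  have hsub : Icc (0:ℝ) b ⊆ Ico (0:ℝ) 1 := fun t ht => ⟨ht.1, lt_of_le_of_lt ht.2 hb.2⟩
  have hD1 : ContDiffOn ℝ 1 (D f) (Ico (0:ℝ) 1) :=
    hC.derivWithin (uniqueDiffOn_Ico 0 1) (by norm_num)
  have hD2cont : ContinuousOn (derivWithin (D f) (Ico 0 1)) (Ico (0:ℝ) 1) :=
    hD1.continuousOn_derivWithin (uniqueDiffOn_Ico 0 1) le_rfl
  obtain ⟨C, hCb⟩ := (isCompact_Icc (a := (0:ℝ)) (b := b)).exists_bound_of_continuousOn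
    (hD2cont.mono hsub)
  refine ⟨max C 0, le_max_right _ _, ?_⟩
  intro x hx y hy
  have hder : ∀ z ∈ Icc (0:ℝ) b,
      HasDerivWithinAt (D f) (derivWithin (D f) (Ico 0 1) z) (Icc 0 b) z := by
    intro z hz
    exact (((hD1.differentiableOn one_ne_zero) z (hsub hz)).hasDerivWithinAt).mono hsub
  have := (convex_Icc (0:ℝ) b).norm_image_sub_le_of_norm_hasDerivWithin_le
    (C := max C 0) hder (fun z hz => le_trans (hCb z hz) (le_max_left C 0)) hy hx
  simpa [Real.norm_eq_abs] using this

/-- Derivative of the n-th iterate. -/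
noncomputable def DP (g : Equiv.Perm ℝ) (n : ℕ) (x : ℝ) : ℝ :=
  ∏ k ∈ Finset.range n, D ⇑g ((⇑g)^[k] x)

lemma DP_pos (hg : IsIcoDiff 2 g) {x : ℝ} (hx : x ∈ Ico (0:ℝ) 1) (n : ℕ) : 0 < DP g n x :=
  Finset.prod_pos fun k _ => deriv_pos hg (iter_mem_Ico hg hx k)

lemma iter_hasDerivAt (hg : IsIcoDiff 2 g) {x : ℝ} (hx : x ∈ Ioo (0:ℝ) 1) (n : ℕ) :
    HasDerivAt ((⇑g)^[n]) (DP g n x) x := by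
  induction n with
  | zero => simpa [DP] using hasDerivAt_id x
  | succ n ih =>
    have h1 : HasDerivAt ⇑g (D ⇑g ((⇑g)^[n] x)) ((⇑g)^[n] x) :=
      hasDerivAt hg.1 (iter_mem_Ioo hg hx n)
    have h2 := HasDerivAt.comp x h1 ih
    have h3 : (⇑g) ∘ (⇑g)^[n] = (⇑g)^[n+1] := (Function.iterate_succ' ⇑g n).symm
    rw [h3] at h2
    have h4 : D (⇑g) ((⇑g)^[n] x) * DP g n x = DP g (n + 1) x := by
      simp only [DP, Finset.prod_range_succ]; ring
    rwa [h4] at h2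

lemma iter_sub_eq (hg : IsIcoDiff 2 g) {u v : ℝ} (hu : u ∈ Ioo (0:ℝ) 1)
    (hv : v ∈ Ioo (0:ℝ) 1) (huv : u < v) (n : ℕ) :
    ∃ c ∈ Ioo u v, (⇑g)^[n] v - (⇑g)^[n] u = DP g n c * (v - u) := by
  have hsub : Icc u v ⊆ Ioo (0:ℝ) 1 := fun t ht =>
    ⟨lt_of_lt_of_le hu.1 ht.1, lt_of_le_of_lt ht.2 hv.2⟩
  have hconts : ContinuousOn ((⇑g)^[n]) (Icc u v) := fun t ht =>
    ((iter_hasDerivAt hg (hsub ht) n).continuousAt).continuousWithinAt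
  have hders : ∀ t ∈ Ioo u v, HasDerivAt ((⇑g)^[n]) (DP g n t) t := fun t ht =>
    iter_hasDerivAt hg (hsub (Ioo_subset_Icc_self ht)) n
  obtain ⟨c, hc, hceq⟩ := exists_hasDerivAt_eq_slope ((⇑g)^[n]) (DP g n) huv hconts hders
  refine ⟨c, hc, ?_⟩
  rw [hceq]
  exact (div_mul_cancel₀ _ (sub_ne_zero.2 (ne_of_gt (by linarith : u < v)))).symm

lemma abs_log_sub_log {m a b : ℝ} (hm : 0 < m) (ha : m ≤ a) (hb : m ≤ b) :
    |Real.log a - Real.log b| ≤ |a - b| / m := by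
  wlog hab : b ≤ a generalizing a b
  · rw [abs_sub_comm, abs_sub_comm a b]; exact this hb ha (le_of_not_ge hab)
  have hb0 : 0 < b := lt_of_lt_of_le hm hb
  have ha0 : 0 < a := lt_of_lt_of_le hm ha
  have hlog : Real.log b ≤ Real.log a := Real.log_le_log hb0 hab
  rw [abs_of_nonneg (by linarith), abs_of_nonneg (by linarith)]
  have h1 : Real.log a - Real.log b = Real.log (a / b) := (Real.log_div ha0.ne' hb0.ne').symm
  rw [h1]
  have h2 : Real.log (a / b) ≤ a / b - 1 := Real.log_le_sub_one_of_pos (by positivity)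
  have h3 : a / b - 1 = (a - b) / b := by field_simp
  have h4 : (a - b) / b ≤ (a - b) / m := by gcongr <;> linarith
  linarith

/-- The key bounded-distortion estimate. -/
lemma distortion (hg : IsIcoDiff 2 g) (hcon : ∀ x ∈ Ioo (0:ℝ) 1, g x < x)
    {b : ℝ} (hb : b ∈ Ioo (0:ℝ) 1) :
    ∃ K : ℝ, 1 ≤ K ∧ ∀ n : ℕ, ∀ u ∈ Icc (g b) b, ∀ v ∈ Icc (g b) b,
      DP g n u ≤ K * DP g n v := by
  have hgb : g b ∈ Ioo (0:ℝ) 1 := maps_Ioo hg hb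
  have hgbb : g b < b := hcon b hb
  have hIccsub : Icc (g b) b ⊆ Icc (0:ℝ) b := fun t ht => ⟨le_trans hgb.1.le ht.1, ht.2⟩
  have hIoo : Icc (g b) b ⊆ Ioo (0:ℝ) 1 := fun t ht =>
    ⟨lt_of_lt_of_le hgb.1 ht.1, lt_of_le_of_lt ht.2 hb.2⟩
  obtain ⟨C, hC0, hClip⟩ := deriv_lipschitz hg.1 hb
  -- minimum of derivative on [0,b]
  have hcompact : IsCompact (Icc (0:ℝ) b) := isCompact_Icc
  have hsub01 : Icc (0:ℝ) b ⊆ Ico (0:ℝ) 1 := fun t ht => ⟨ht.1, lt_of_le_of_lt ht.2 hb.2⟩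
  obtain ⟨z, hz, hzmin⟩ := hcompact.exists_isMinOn (nonempty_Icc.2 (by linarith [hb.1]))
    ((deriv_continuousOn hg.1).mono hsub01)
  set m := D ⇑g z with hm
  have hm0 : 0 < m := deriv_pos hg (hsub01 hz)
  have hmle : ∀ t ∈ Icc (0:ℝ) b, m ≤ D ⇑g t := fun t ht => hzmin ht
  refine ⟨Real.exp (C / m * b), Real.one_le_exp (by have := hb.1; positivity), ?_⟩
  intro n u hu v hv
  have huI : u ∈ Ioo (0:ℝ) 1 := hIoo hu
  have hvI : v ∈ Ioo (0:ℝ) 1 := hIoo hv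
  have hDPu : 0 < DP g n u := DP_pos hg ⟨huI.1.le, huI.2⟩ n
  have hDPv : 0 < DP g n v := DP_pos hg ⟨hvI.1.le, hvI.2⟩ n
  -- iterates of points of Icc (g b) b stay in [g^[k+1] b, g^[k] b] ⊆ [0, b]
  have hiter_mem : ∀ (t : ℝ), t ∈ Icc (g b) b → ∀ k : ℕ,
      (⇑g)^[k] t ∈ Icc ((⇑g)^[k+1] b) ((⇑g)^[k] b) := by
    intro t ht k
    have ht' : t ∈ Ico (0:ℝ) 1 := Ioo_subset_Ico_self (hIoo ht)
    have hgb' : g b ∈ Ico (0:ℝ) 1 := Ioo_subset_Ico_self hgb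
    have hb' : b ∈ Ico (0:ℝ) 1 := ⟨hb.1.le, hb.2⟩
    constructor
    · rw [Function.iterate_succ_apply]
      exact (iter_strictMonoOn hg k).monotoneOn hgb' ht' ht.1
    · exact (iter_strictMonoOn hg k).monotoneOn ht' hb' ht.2
  -- telescoping sum bound
  have hsum : ∀ n : ℕ, ∑ k ∈ Finset.range n, ((⇑g)^[k] b - (⇑g)^[k+1] b) ≤ b := by
    intro n
    rw [Finset.sum_range_sub' (fun k => (⇑g)^[k] b)]
    have := (iter_mem_Ioo hg hb n).1
    simp only [Function.iterate_zero_apply]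
    linarith
  -- log comparison
  have hlog : Real.log (DP g n u) - Real.log (DP g n v) ≤ C / m * b := by
    have hprod : ∀ w : ℝ, w ∈ Icc (g b) b →
        Real.log (DP g n w) = ∑ k ∈ Finset.range n, Real.log (D ⇑g ((⇑g)^[k] w)) := by
      intro w hw
      rw [DP, Real.log_prod]
      intro k _
      exact (deriv_pos hg (iter_mem_Ico hg (Ioo_subset_Ico_self (hIoo hw)) k)).ne'
    rw [hprod u hu, hprod v hv, ← Finset.sum_sub_distrib]
    have hterm : ∀ k ∈ Finset.range n,
        Real.log (D ⇑g ((⇑g)^[k] u)) - Real.log (D ⇑g ((⇑g)^[k] v)) ≤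
          C / m * ((⇑g)^[k] b - (⇑g)^[k+1] b) := by
      intro k _
      have hku := hiter_mem u hu k
      have hkv := hiter_mem v hv k
      have hiterb : ∀ j : ℕ, (⇑g)^[j] b ≤ b := by
        intro j
        induction j with
        | zero => simp
        | succ j ih =>
          rw [Function.iterate_succ_apply']
          exact le_trans (hcon _ (iter_mem_Ioo hg hb j)).le ih
      have hmemIcc : ∀ w : ℝ, w ∈ Icc ((⇑g)^[k+1] b) ((⇑g)^[k] b) → w ∈ Icc (0:ℝ) b := by
        intro w hw
        constructor
        · exact le_trans (iter_mem_Ioo hg hb (k+1)).1.le hw.1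
        · exact le_trans hw.2 (hiterb k)
      have h1 := abs_log_sub_log hm0 (hmle _ (hmemIcc _ hku)) (hmle _ (hmemIcc _ hkv))
      have h2 : |D ⇑g ((⇑g)^[k] u) - D ⇑g ((⇑g)^[k] v)| ≤
          C * |(⇑g)^[k] u - (⇑g)^[k] v| := hClip _ (hmemIcc _ hku) _ (hmemIcc _ hkv)
      have h3 : |(⇑g)^[k] u - (⇑g)^[k] v| ≤ (⇑g)^[k] b - (⇑g)^[k+1] b := by
        rw [abs_sub_le_iff]
        constructor <;> linarith [hku.1, hku.2, hkv.1, hkv.2]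
      calc Real.log (D ⇑g ((⇑g)^[k] u)) - Real.log (D ⇑g ((⇑g)^[k] v)) ≤
          |Real.log (D ⇑g ((⇑g)^[k] u)) - Real.log (D ⇑g ((⇑g)^[k] v))| := le_abs_self _
        _ ≤ |D ⇑g ((⇑g)^[k] u) - D ⇑g ((⇑g)^[k] v)| / m := h1
        _ ≤ (C * ((⇑g)^[k] b - (⇑g)^[k+1] b)) / m := by
            apply (div_le_div_iff_of_pos_right hm0).2
            exact le_trans h2 (mul_le_mul_of_nonneg_left h3 hC0)
        _ = C / m * ((⇑g)^[k] b - (⇑g)^[k+1] b) := by ring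
    calc ∑ k ∈ Finset.range n, (Real.log (D ⇑g ((⇑g)^[k] u)) - Real.log (D ⇑g ((⇑g)^[k] v)))
        ≤ ∑ k ∈ Finset.range n, C / m * ((⇑g)^[k] b - (⇑g)^[k+1] b) :=
          Finset.sum_le_sum hterm
      _ = C / m * ∑ k ∈ Finset.range n, ((⇑g)^[k] b - (⇑g)^[k+1] b) := by
          rw [Finset.mul_sum]
      _ ≤ C / m * b := by
          have := hsum n
          have hCm : 0 ≤ C / m := by positivity
          nlinarith
  -- exponentiate
  have := Real.exp_le_exp.2 (by linarith [hlog] :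
    Real.log (DP g n u) ≤ C / m * b + Real.log (DP g n v))
  rw [Real.exp_log hDPu, Real.exp_add, Real.exp_log hDPv] at this
  exact this

lemma mvt (hC : ContDiffOn ℝ 2 f (Ico (0:ℝ) 1)) {u v : ℝ} (hu : u ∈ Ioo (0:ℝ) 1)
    (hv : v ∈ Ioo (0:ℝ) 1) (huv : u < v) :
    ∃ ξ ∈ Ioo u v, D f ξ = (f v - f u) / (v - u) := by
  have hsub : Icc u v ⊆ Ioo (0:ℝ) 1 := fun t ht =>
    ⟨lt_of_lt_of_le hu.1 ht.1, lt_of_le_of_lt ht.2 hv.2⟩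
  have hconts : ContinuousOn f (Icc u v) :=
    hC.continuousOn.mono (fun t ht => Ioo_subset_Ico_self (hsub ht))
  exact exists_hasDerivAt_eq_slope f (D f) huv hconts
    (fun t ht => hasDerivAt hC (hsub (Ioo_subset_Icc_self ht)))

lemma comm_iterate (hc : ∀ x, g (h x) = h (g x)) (n : ℕ) (x : ℝ) :
    h ((⇑g)^[n] x) = (⇑g)^[n] (h x) := by
  induction n with
  | zero => simp
  | succ n ih =>
    rw [Function.iterate_succ_apply', Function.iterate_succ_apply', ← hc, ih]

lemma exists_moved (hh : IsIcoDiff 2 h) (hne : h ≠ 1) : ∃ y ∈ Ioo (0:ℝ) 1, h y ≠ y := by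
  by_contra hcon
  push_neg at hcon
  apply hne
  ext y
  rcases em (y ∈ Ico (0:ℝ) 1) with hy | hy
  · rcases eq_or_lt_of_le hy.1 with h0 | h0
    · rw [← h0]; simpa using map_zero hh
    · simpa using hcon y ⟨h0, hy.2⟩
  · simpa using hh.2.2.2.2 y hy

lemma deriv_zero_one (hh : IsIcoDiff 2 h) (q : ℕ → ℝ) (hq : ∀ n, q n ∈ Ioo (0:ℝ) 1)
    (hqfix : ∀ n, h (q n) = q n) (hq0 : Tendsto q atTop (𝓝 0)) :
    D ⇑h 0 = 1 := by
  have h0 : (0:ℝ) ∈ Ico (0:ℝ) 1 := ⟨le_refl 0, one_pos⟩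
  have hd := hasDerivWithinAt hh.1 h0
  rw [hasDerivWithinAt_iff_tendsto_slope] at hd
  have hqin : Tendsto q atTop (𝓝[Ico (0:ℝ) 1 \ {0}] 0) := by
    rw [tendsto_nhdsWithin_iff]
    refine ⟨hq0, Eventually.of_forall fun n => ⟨⟨(hq n).1.le, (hq n).2⟩, (hq n).1.ne'⟩⟩
  have hcomp := hd.comp hqin
  have heq : ∀ n, slope ⇑h 0 (q n) = 1 := by
    intro n
    rw [slope_def_field, hqfix n, map_zero hh]
    simp [div_self (hq n).1.ne']
  have : Tendsto (fun _ : ℕ => (1:ℝ)) atTop (𝓝 (D ⇑h 0)) := by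
    refine hcomp.congr fun n => ?_
    exact heq n
  exact tendsto_nhds_unique this tendsto_const_nhds

lemma kopell_aux (hg : IsIcoDiff 2 g) (hh : IsIcoDiff 2 h)
    (hc : ∀ x, g (h x) = h (g x))
    (hcon : ∀ x ∈ Ioo (0:ℝ) 1, g x < x)
    (hne : h ≠ 1) {b : ℝ} (hb : b ∈ Ioo (0:ℝ) 1) (hfixb : h b = b) : False := by
  obtain ⟨y0, hy0, hhy0⟩ := exists_moved hh hne
  -- Step 1: find a moved point below b
  obtain ⟨y, hy, hyb, hhy⟩ : ∃ y ∈ Ioo (0:ℝ) 1, y < b ∧ h y ≠ y := by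
    rcases lt_or_ge y0 b with hlt | hle
    · exact ⟨y0, hy0, hlt, hhy0⟩
    · have hby0 : b < y0 := lt_of_le_of_ne hle (by rintro rfl; exact hhy0 hfixb)
      have htend := iter_tendsto_zero hg hcon hy0
      obtain ⟨n, hn⟩ := (htend.eventually_lt_const hb.1).exists
      refine ⟨(⇑g)^[n] y0, iter_mem_Ioo hg hy0 n, hn, ?_⟩
      rw [comm_iterate hc]
      intro heq
      exact hhy0 ((g.injective.iterate n) heq)
  -- Step 2: minimal n with g^[n+1] b < y
  have hex : ∃ n : ℕ, (⇑g)^[n+1] b < y := by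
    have htend := (iter_tendsto_zero hg hcon hb).comp (tendsto_add_atTop_nat 1)
    obtain ⟨n, hn⟩ := (htend.eventually_lt_const hy.1).exists
    exact ⟨n, hn⟩
  classical
  set n := Nat.find hex with hndef
  have hn : (⇑g)^[n+1] b < y := Nat.find_spec hex
  have hfixiter : ∀ k : ℕ, h ((⇑g)^[k] b) = (⇑g)^[k] b := by
    intro k; rw [comm_iterate hc, hfixb]
  have hyleB : y ≤ (⇑g)^[n] b := by
    rcases Nat.eq_zero_or_pos n with h0 | h0
    · rw [h0]; simpa using hyb.le
    · have hmin := Nat.find_min hex (m := n - 1) (by rw [← hndef]; omega)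
      push_neg at hmin
      have heq : n - 1 + 1 = n := by omega
      rwa [heq] at hmin
  have hyneB : y ≠ (⇑g)^[n] b := by
    intro heq; exact hhy (heq ▸ hfixiter n)
  set B := (⇑g)^[n] b with hBdef
  have hB : B ∈ Ioo (0:ℝ) 1 := iter_mem_Ioo hg hb n
  have hfixB : h B = B := hfixiter n
  have hgB : g B ∈ Ioo (0:ℝ) 1 := maps_Ioo hg hB
  have hgBB : g B < B := hcon B hB
  have hfixgB : h (g B) = g B := by rw [← hc, hfixB]
  have hygB : g B < y := by
    have : (⇑g)^[n+1] b = g B := Function.iterate_succ_apply' ⇑g n b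
    rw [← this]; exact hn
  have hyB : y < B := lt_of_le_of_ne hyleB hyneB
  -- Step 3: h y in (g B, B)
  have hIcoB : B ∈ Ico (0:ℝ) 1 := ⟨hB.1.le, hB.2⟩
  have hIcogB : g B ∈ Ico (0:ℝ) 1 := ⟨hgB.1.le, hgB.2⟩
  have hIcoy : y ∈ Ico (0:ℝ) 1 := ⟨hy.1.le, hy.2⟩
  have hhymem : h y ∈ Ioo (g B) B := by
    constructor
    · have := hh.2.2.2.1 hIcogB hIcoy hygB; rwa [hfixgB] at this
    · have := hh.2.2.2.1 hIcoy hIcoB hyB; rwa [hfixB] at this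
  -- Step 4: w < z
  set w := min y (h y) with hwdef
  set z := max y (h y) with hzdef
  have hwz : w < z := min_lt_max.2 (Ne.symm hhy)
  have hwmem : w ∈ Ioo (g B) B := by
    rcases min_choice y (h y) with hmin | hmin <;> rw [hwdef, hmin]
    · exact ⟨hygB, hyB⟩
    · exact hhymem
  have hzmem : z ∈ Ioo (g B) B := by
    rcases max_choice y (h y) with hmax | hmax <;> rw [hzdef, hmax]
    · exact ⟨hygB, hyB⟩
    · exact hhymem
  have hIoosub : Ioo (g B) B ⊆ Ioo (0:ℝ) 1 := fun t ht =>
    ⟨lt_trans hgB.1 ht.1, lt_trans ht.2 hB.2⟩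
  -- Step 5: distortion constant
  obtain ⟨K, hK1, hKd⟩ := distortion hg hcon hB
  have hK0 : 0 < K := lt_of_lt_of_le one_pos hK1
  set δ := (z - w) / (K * (B - g B)) with hδdef
  have hδ : 0 < δ := by
    apply div_pos (by linarith)
    exact mul_pos hK0 (by linarith)
  -- Step 6: derivative of h at 0 is 1
  have hq : ∀ m : ℕ, (⇑g)^[m] B ∈ Ioo (0:ℝ) 1 := fun m => iter_mem_Ioo hg hB m
  have hqfix : ∀ m : ℕ, h ((⇑g)^[m] B) = (⇑g)^[m] B := by
    intro m; rw [comm_iterate hc, hfixB]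
  have hqtend : Tendsto (fun m => (⇑g)^[m] B) atTop (𝓝 0) := iter_tendsto_zero hg hcon hB
  have hd0 : D ⇑h 0 = 1 := deriv_zero_one hh _ hq hqfix hqtend
  -- Step 7: the key pointwise estimate
  have key : ∀ m : ℕ, ∃ ξ : ℝ, ξ ∈ Ioo (0:ℝ) 1 ∧ ξ ≤ (⇑g)^[m] B ∧ δ ≤ |D ⇑h ξ - 1| := by
    intro m
    set p := (⇑g)^[m] (g B) with hpdef
    set qm := (⇑g)^[m] B with hqmdef
    set aN := (⇑g)^[m] y with haNdef
    have hpq : p < qm := iter_strictMonoOn hg m hIcogB hIcoB hgBB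
    have hpa : p < aN := iter_strictMonoOn hg m hIcogB hIcoy hygB
    have haq : aN < qm := iter_strictMonoOn hg m hIcoy hIcoB hyB
    have hpI : p ∈ Ioo (0:ℝ) 1 := iter_mem_Ioo hg hgB m
    have haI : aN ∈ Ioo (0:ℝ) 1 := iter_mem_Ioo hg hy m
    have hqI : qm ∈ Ioo (0:ℝ) 1 := hq m
    have hfixp : h p = p := by rw [hpdef, comm_iterate hc, hfixgB]
    have hhaN : h aN = (⇑g)^[m] (h y) := by rw [haNdef, comm_iterate hc]
    -- MVT for iterate on (w, z) and (g B, B)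
    obtain ⟨c, hc1, hc2⟩ := iter_sub_eq hg (hIoosub hwmem) (hIoosub hzmem) hwz m
    obtain ⟨d, hd1, hd2⟩ := iter_sub_eq hg hgB hB hgBB m
    have hcIcc : c ∈ Icc (g B) B := ⟨le_trans hwmem.1.le hc1.1.le, le_trans hc1.2.le hzmem.2.le⟩
    have hdIcc : d ∈ Icc (g B) B := Ioo_subset_Icc_self hd1
    have hcIco : c ∈ Ico (0:ℝ) 1 := ⟨(lt_of_lt_of_le hgB.1 hcIcc.1).le, lt_of_le_of_lt hcIcc.2 hB.2⟩
    have hdIco : d ∈ Ico (0:ℝ) 1 := ⟨(lt_of_lt_of_le hgB.1 hdIcc.1).le, lt_of_le_of_lt hdIcc.2 hB.2⟩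
    have hDPc : 0 < DP g m c := DP_pos hg hcIco m
    have hDPd : 0 < DP g m d := DP_pos hg hdIco m
    -- |h aN - aN| = g^[m] z - g^[m] w
    have habs : |h aN - aN| = (⇑g)^[m] z - (⇑g)^[m] w := by
      have hIcohy : h y ∈ Ico (0:ℝ) 1 := ⟨(lt_trans hgB.1 hhymem.1).le, lt_trans hhymem.2 hB.2⟩
      rcases lt_or_gt_of_ne hhy with hlt | hgt
      · -- h y < y : w = h y, z = y
        have hw' : w = h y := min_eq_right hlt.le
        have hz' : z = y := max_eq_left hlt.le
        have hmono : (⇑g)^[m] (h y) < (⇑g)^[m] y := iter_strictMonoOn hg m hIcohy hIcoy hlt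
        rw [hw', hz', hhaN]
        rw [abs_of_neg (by linarith)]
        ring
      · have hw' : w = y := min_eq_left hgt.le
        have hz' : z = h y := max_eq_right hgt.le
        have hmono : (⇑g)^[m] y < (⇑g)^[m] (h y) := iter_strictMonoOn hg m hIcoy hIcohy hgt
        rw [hw', hz', hhaN]
        rw [abs_of_pos (by linarith)]
    -- MVT for h on [p, aN]
    obtain ⟨ξ, hξ1, hξ2⟩ := mvt hh.1 hpI haI hpa
    refine ⟨ξ, ⟨lt_trans hpI.1 hξ1.1, lt_trans hξ1.2 haI.2⟩, le_of_lt (lt_trans hξ1.2 haq), ?_⟩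
    have hξval : D ⇑h ξ - 1 = (h aN - aN) / (aN - p) := by
      have hne0 : aN - p ≠ 0 := by
        intro h0
        have := sub_eq_zero.1 h0
        linarith
      rw [hξ2, hfixp, div_sub_one hne0]
      ring_nf
    have hapos : (0:ℝ) < aN - p := by linarith
    have habs2 : |D ⇑h ξ - 1| = |h aN - aN| / (aN - p) := by
      rw [hξval, abs_div, abs_of_pos hapos]
    rw [habs2, habs]
    -- lower bound
    have hnum : (⇑g)^[m] z - (⇑g)^[m] w = DP g m c * (z - w) := hc2
    have hden : qm - p = DP g m d * (B - g B) := hd2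
    have hKcd : DP g m d ≤ K * DP g m c := hKd m d hdIcc c hcIcc
    have hA : (0:ℝ) ≤ (⇑g)^[m] z - (⇑g)^[m] w := by
      rw [hnum]; exact (mul_pos hDPc (by linarith : (0:ℝ) < z - w)).le
    have hle1 : ((⇑g)^[m] z - (⇑g)^[m] w) / (qm - p) ≤ ((⇑g)^[m] z - (⇑g)^[m] w) / (aN - p) := by
      gcongr
    refine le_trans ?_ hle1
    rw [hnum, hden, hδdef]
    rw [div_le_div_iff₀ (mul_pos hK0 (by linarith : (0:ℝ) < B - g B))
      (mul_pos hDPd (by linarith : (0:ℝ) < B - g B))]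
    have h3 : (z - w) * (DP g m d * (B - g B)) = (DP g m d) * ((z - w) * (B - g B)) := by ring
    have h4 : DP g m c * (z - w) * (K * (B - g B)) = (K * DP g m c) * ((z - w) * (B - g B)) := by
      ring
    rw [h3, h4]
    exact mul_le_mul_of_nonneg_right hKcd
      (mul_nonneg (by linarith) (by linarith))
  -- Step 8: take limits
  choose ξ hξmem hξle hξbound using key
  have hξtend : Tendsto ξ atTop (𝓝 0) := by
    apply tendsto_of_tendsto_of_tendsto_of_le_of_le tendsto_const_nhds hqtend
    · exact fun m => (hξmem m).1.le
    · exact hξle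
  have hcw : ContinuousWithinAt (D ⇑h) (Ico 0 1) 0 :=
    (deriv_continuousOn hh.1).continuousWithinAt (show (0:ℝ) ∈ Ico (0:ℝ) 1 from ⟨le_refl 0, one_pos⟩)
  have hDtend : Tendsto (fun m => D ⇑h (ξ m)) atTop (𝓝 1) := by
    have h1 : Tendsto ξ atTop (𝓝[Ico (0:ℝ) 1] 0) := by
      rw [tendsto_nhdsWithin_iff]
      exact ⟨hξtend, Eventually.of_forall fun m => ⟨(hξmem m).1.le, (hξmem m).2⟩⟩
    have := hcw.tendsto.comp h1
    rwa [hd0] at this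
  have habstend : Tendsto (fun m => |D ⇑h (ξ m) - 1|) atTop (𝓝 0) := by
    have h1 := (hDtend.sub_const 1).abs
    norm_num at h1
    exact h1
  obtain ⟨m, hm⟩ := (habstend.eventually_lt_const hδ).exists
  exact absurd (hξbound m) (not_le.2 hm)

end Kopell

/-- Kopell's Lemma: if g, h are commuting C² diffeomorphisms of [0,1), g has no fixed
point in (0,1), and h ≠ id, then h has no fixed point in (0,1). -/
theorem kopell (g h : Equiv.Perm ℝ) (hg : IsIcoDiff 2 g) (hh : IsIcoDiff 2 h)
    (hcomm : Commute g h)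
    (hgfree : ∀ x ∈ Set.Ioo (0:ℝ) 1, g x ≠ x)
    (hne : h ≠ 1) :
    ∀ x ∈ Set.Ioo (0:ℝ) 1, h x ≠ x := by
  intro x hx hfix
  have hc : ∀ t : ℝ, g (h t) = h (g t) := by
    intro t
    have := congrArg (fun e : Equiv.Perm ℝ => e t) hcomm.eq
    simpa [Equiv.Perm.mul_apply] using this
  rcases Kopell.contract_or_expand hg hgfree with hcon | hexp
  · exact Kopell.kopell_aux hg hh hc hcon hne hx hfix
  · have hg' := Kopell.inv_isIcoDiff hg
    have hc' : ∀ t : ℝ, g⁻¹ (h t) = h (g⁻¹ t) := by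
      intro t
      apply g.injective
      rw [Equiv.Perm.coe_inv, Equiv.apply_symm_apply, hc, Equiv.apply_symm_apply]
    have hcon' : ∀ t ∈ Set.Ioo (0:ℝ) 1, g⁻¹ t < t := by
      intro t ht
      have hmem : (g⁻¹ : Equiv.Perm ℝ) t ∈ Set.Ioo (0:ℝ) 1 := Kopell.maps_Ioo hg' ht
      have h2 := hexp _ hmem
      rwa [Equiv.Perm.coe_inv, Equiv.apply_symm_apply] at h2
    exact Kopell.kopell_aux hg' hh hc' hcon' hne hx hfix
end

section
/- Let g be an orientation-preserving C² diffeomorphism of [0,1) with no fixed point in (0,1). Then the centralizer of g in the group of orientation-preserving C² diffeomorphisms of [0,1) is abelian. -/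
namespace HK
open Set Filter Topology

local notation "S" => Set.Ico (0:ℝ) 1

variable {r : ℕ∞} {e e' : Equiv.Perm ℝ}

theorem mapsTo (he : IsIcoDiff r e) : MapsTo ⇑e S S := he.2.2.1.mapsTo

theorem map_mem (he : IsIcoDiff r e) {x : ℝ} (hx : x ∈ S) : e x ∈ S := he.2.2.1.mapsTo hx

theorem map_zero (he : IsIcoDiff r e) : e 0 = 0 := by
  rcases he.2.2.1.surjOn (show (0:ℝ) ∈ S by simp) with ⟨y, hy, hy0⟩
  rcases eq_or_lt_of_le hy.1 with h | h
  · rwa [← h] at hy0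
  · have := he.2.2.2.1 (show (0:ℝ) ∈ S by simp) hy h
    rw [hy0] at this
    have h0 := (he.2.2.1.mapsTo (show (0:ℝ) ∈ S by simp)).1
    linarith

theorem strictMonoOn (he : IsIcoDiff r e) : StrictMonoOn ⇑e S := he.2.2.2.1

theorem lt_map (he : IsIcoDiff r e) {x y : ℝ} (hx : x ∈ S) (hy : y ∈ S) (h : x < y) :
    e x < e y := he.2.2.2.1 hx hy h

theorem le_map (he : IsIcoDiff r e) {x y : ℝ} (hx : x ∈ S) (hy : y ∈ S) (h : x ≤ y) :
    e x ≤ e y := by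
  rcases eq_or_lt_of_le h with rfl | h
  · exact le_rfl
  · exact (he.2.2.2.1 hx hy h).le

theorem map_Ioo (he : IsIcoDiff r e) {x : ℝ} (hx : x ∈ Ioo (0:ℝ) 1) : e x ∈ Ioo (0:ℝ) 1 := by
  have h1 := map_mem he (Ioo_subset_Ico_self hx)
  have h2 : e 0 < e x := lt_map he (by simp) (Ioo_subset_Ico_self hx) hx.1
  rw [map_zero he] at h2
  exact ⟨h2, h1.2⟩

theorem inv_isIcoDiff (he : IsIcoDiff r e) : IsIcoDiff r e⁻¹ := by
  have hinv : InvOn ⇑e ⇑e⁻¹ S S := ⟨fun x _ => e.apply_symm_apply x, fun x _ => e.symm_apply_apply x⟩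
  have hbij : BijOn ⇑e⁻¹ S S := he.2.2.1.symm hinv
  refine ⟨he.2.1, ?_, hbij, ?_, ?_⟩
  · show ContDiffOn ℝ r ⇑e S
    exact he.1
  · show StrictMonoOn ⇑e.symm S
    intro x hx y hy hxy
    by_contra hc
    push_neg at hc
    have hx' : e.symm x ∈ S := hbij.mapsTo hx
    have hy' : e.symm y ∈ S := hbij.mapsTo hy
    have := le_map he hy' hx' hc
    rw [e.apply_symm_apply, e.apply_symm_apply] at this
    linarith
  · intro x hx
    show e.symm x = x
    have := he.2.2.2.2 x hx
    conv_lhs => rw [← this]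
    exact e.symm_apply_apply x

theorem mul_isIcoDiff (he : IsIcoDiff r e) (he' : IsIcoDiff r e') : IsIcoDiff r (e * e') := by
  refine ⟨?_, ?_, ?_, ?_, ?_⟩
  · show ContDiffOn ℝ r (⇑e ∘ ⇑e') S
    exact he.1.comp he'.1 (mapsTo he')
  · show ContDiffOn ℝ r ⇑(e * e').symm S
    have : ⇑(e * e').symm = ⇑e'.symm ∘ ⇑e.symm := rfl
    rw [this]
    exact he'.2.1.comp he.2.1 (mapsTo (inv_isIcoDiff he))
  · exact he.2.2.1.comp he'.2.2.1
  · intro x hx y hy hxy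
    exact lt_map he (map_mem he' hx) (map_mem he' hy) (lt_map he' hx hy hxy)
  · intro x hx
    show e (e' x) = x
    rw [he'.2.2.2.2 x hx, he.2.2.2.2 x hx]

theorem one_isIcoDiff : IsIcoDiff r 1 := by
  refine ⟨contDiffOn_id, contDiffOn_id, ?_, ?_, fun x _ => rfl⟩
  · exact (bijOn_id S).congr (fun x _ => rfl)
  · intro x hx y hy hxy; exact hxy

theorem pow_isIcoDiff (he : IsIcoDiff r e) (n : ℕ) : IsIcoDiff r (e ^ n) := by
  induction n with
  | zero => simpa using one_isIcoDiff
  | succ n ih => rw [pow_succ]; exact mul_isIcoDiff ih he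

theorem zpow_isIcoDiff (he : IsIcoDiff r e) (n : ℤ) : IsIcoDiff r (e ^ n) := by
  rcases n with n | n
  · simpa using pow_isIcoDiff he n
  · rw [zpow_negSucc]
    exact inv_isIcoDiff (pow_isIcoDiff he (n+1))

theorem continuousOn (he : IsIcoDiff r e) : ContinuousOn ⇑e S := he.1.continuousOn

theorem continuousAt (he : IsIcoDiff r e) {x : ℝ} (hx : x ∈ Ioo (0:ℝ) 1) :
    ContinuousAt ⇑e x :=
  (continuousOn he).continuousAt (Ico_mem_nhds hx.1 hx.2)



noncomputable def d (e : Equiv.Perm ℝ) (x : ℝ) : ℝ := derivWithin ⇑e S x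

theorem uds : UniqueDiffOn ℝ S := uniqueDiffOn_Ico 0 1

theorem hasDeriv (he : ContDiffOn ℝ 2 ⇑e S) {x : ℝ} (hx : x ∈ S) :
    HasDerivWithinAt ⇑e (d e x) S x :=
  ((he.differentiableOn (by norm_num)) x hx).hasDerivWithinAt

theorem deriv_comp (he : ContDiffOn ℝ 2 ⇑e S) (he' : ContDiffOn ℝ 2 ⇑e' S)
    (hm : MapsTo ⇑e' S S) {x : ℝ} (hx : x ∈ S) :
    d (e * e') x = d e (e' x) * d e' x := by
  have h := (hasDeriv he (hm hx)).comp x (hasDeriv he' hx) hm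
  exact h.derivWithin (uds x hx)

theorem neBot_punct {x : ℝ} (hx : x ∈ S) : (𝓝[S \ {x}] x).NeBot := by
  have hsub : Ioo x 1 ⊆ S \ {x} :=
    fun y hy => ⟨⟨le_trans hx.1 hy.1.le, hy.2⟩, ne_of_gt hy.1⟩
  have h1 : (𝓝[Ioo x 1] x).NeBot := by
    rw [nhdsWithin_Ioo_eq_nhdsGT hx.2]
    exact nhdsGT_neBot x
  exact h1.mono (nhdsWithin_mono x hsub)

theorem deriv_nonneg (he : ContDiffOn ℝ 2 ⇑e S) (hmono : StrictMonoOn ⇑e S)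
    {x : ℝ} (hx : x ∈ S) : 0 ≤ d e x := by
  have h := (hasDerivWithinAt_iff_tendsto_slope).mp (hasDeriv he hx)
  have hne := neBot_punct hx
  refine ge_of_tendsto h ?_
  refine eventually_nhdsWithin_of_forall (fun y hy => ?_)
  rcases lt_or_gt_of_ne (Ne.symm hy.2) with h1 | h1
  · have := hmono hx hy.1 h1
    rw [slope_def_field]
    exact div_nonneg (by linarith) (by linarith)
  · have := hmono hy.1 hx h1
    rw [slope_def_field]
    exact div_nonneg_of_nonpos (by linarith) (by linarith)

theorem deriv_pos (he : IsIcoDiff 2 e) {x : ℝ} (hx : x ∈ S) : 0 < d e x := by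
  have hprod : d e⁻¹ (e x) * d e x = 1 := by
    have h1 : HasDerivWithinAt ⇑(e⁻¹) (d e⁻¹ (e x)) S (e x) :=
      ((he.2.1.differentiableOn (by norm_num)) (e x) (he.2.2.1.mapsTo hx)).hasDerivWithinAt
    have h := h1.comp x (hasDeriv he.1 hx) he.2.2.1.mapsTo
    have hid : (⇑(e⁻¹) ∘ ⇑e) = id := by funext y; exact e.symm_apply_apply y
    rw [hid] at h
    have h2 := h.derivWithin (uds x hx)
    rw [derivWithin_id x S (uds x hx)] at h2
    exact h2.symm
  have h0 : d e x ≠ 0 := by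
    intro h; rw [h, mul_zero] at hprod; norm_num at hprod
  exact lt_of_le_of_ne (deriv_nonneg he.1 he.2.2.2.1 hx) (Ne.symm h0)



/-- decreasing orbit converging to the bottom of an invariant interval -/
theorem orbit_tendsto (φ : ℝ → ℝ) (hc : ContinuousOn φ S) {l x : ℝ}
    (hl : 0 ≤ l) (hx1 : x < 1) (hlx : l < x)
    (hmaps : ∀ y ∈ Ioc l x, φ y ∈ Ioc l x) (hlt : ∀ y ∈ Ioc l x, φ y < y) :
    Tendsto (fun n => φ^[n] x) atTop (𝓝 l) := by
  set u : ℕ → ℝ := fun n => φ^[n] x with hu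
  have hmem : ∀ n, u n ∈ Ioc l x := by
    intro n
    induction n with
    | zero => exact ⟨hlx, le_rfl⟩
    | succ n ih =>
      have : u (n+1) = φ (u n) := Function.iterate_succ_apply' φ n x
      rw [this]; exact hmaps _ ih
  have hanti : Antitone u := by
    refine antitone_nat_of_succ_le (fun n => ?_)
    have : u (n+1) = φ (u n) := Function.iterate_succ_apply' φ n x
    rw [this]; exact (hlt _ (hmem n)).le
  have hbdd : BddBelow (range u) := ⟨l, by rintro y ⟨n, rfl⟩; exact (hmem n).1.le⟩
  have htend : Tendsto u atTop (𝓝 (⨅ n, u n)) := tendsto_atTop_ciInf hanti hbdd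
  set L := ⨅ n, u n with hL
  have hLl : l ≤ L := le_ciInf (fun n => (hmem n).1.le)
  have hLx : L ≤ x := ciInf_le ⟨l, by rintro y ⟨n, rfl⟩; exact (hmem n).1.le⟩ 0
  rcases eq_or_lt_of_le hLl with h | h
  · rwa [← h] at htend
  · exfalso
    have hLmem : L ∈ Ioo (0:ℝ) 1 := ⟨lt_of_le_of_lt hl h, lt_of_le_of_lt hLx hx1⟩
    have hca : ContinuousAt φ L := hc.continuousAt (Ico_mem_nhds hLmem.1 hLmem.2)
    have h1 : Tendsto (fun n => φ (u n)) atTop (𝓝 (φ L)) := hca.tendsto.comp htend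
    have h2 : Tendsto (fun n => u (n+1)) atTop (𝓝 L) := htend.comp (tendsto_add_atTop_nat 1)
    have h3 : (fun n => φ (u n)) = fun n => u (n+1) := by
      funext n; exact (Function.iterate_succ_apply' φ n x).symm
    rw [h3] at h1
    have : φ L = L := tendsto_nhds_unique h1 h2
    have hLmem' : L ∈ Ioc l x := ⟨h, hLx⟩
    exact absurd this (ne_of_lt (hlt _ hLmem'))

/-- increasing orbit converging to 1 -/
theorem orbit_tendsto_one (φ : ℝ → ℝ) (hc : ContinuousOn φ S) {z : ℝ}
    (hz : z ∈ Ioo (0:ℝ) 1)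
    (hmaps : ∀ y ∈ Ico z 1, φ y ∈ Ico z 1) (hgt : ∀ y ∈ Ico z 1, y < φ y) :
    Tendsto (fun n => φ^[n] z) atTop (𝓝 1) := by
  set u : ℕ → ℝ := fun n => φ^[n] z with hu
  have hmem : ∀ n, u n ∈ Ico z 1 := by
    intro n
    induction n with
    | zero => exact ⟨le_rfl, hz.2⟩
    | succ n ih =>
      have : u (n+1) = φ (u n) := Function.iterate_succ_apply' φ n z
      rw [this]; exact hmaps _ ih
  have hmono : Monotone u := by
    refine monotone_nat_of_le_succ (fun n => ?_)
    have : u (n+1) = φ (u n) := Function.iterate_succ_apply' φ n z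
    rw [this]; exact (hgt _ (hmem n)).le
  have hbdd : BddAbove (range u) := ⟨1, by rintro y ⟨n, rfl⟩; exact (hmem n).2.le⟩
  have htend : Tendsto u atTop (𝓝 (⨆ n, u n)) := tendsto_atTop_ciSup hmono hbdd
  set L := ⨆ n, u n with hL
  have hL1 : L ≤ 1 := ciSup_le (fun n => (hmem n).2.le)
  have hLz : z ≤ L := le_ciSup hbdd 0
  rcases eq_or_lt_of_le hL1 with h | h
  · rwa [h] at htend
  · exfalso
    have hLmem : L ∈ Ioo (0:ℝ) 1 := ⟨lt_of_lt_of_le hz.1 hLz, h⟩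
    have hca : ContinuousAt φ L := hc.continuousAt (Ico_mem_nhds hLmem.1 hLmem.2)
    have h1 : Tendsto (fun n => φ (u n)) atTop (𝓝 (φ L)) := hca.tendsto.comp htend
    have h2 : Tendsto (fun n => u (n+1)) atTop (𝓝 L) := htend.comp (tendsto_add_atTop_nat 1)
    have h3 : (fun n => φ (u n)) = fun n => u (n+1) := by
      funext n; exact (Function.iterate_succ_apply' φ n z).symm
    rw [h3] at h1
    have hfix : φ L = L := tendsto_nhds_unique h1 h2
    exact absurd hfix (ne_of_gt (hgt _ ⟨hLz, h⟩))

theorem d_one {x : ℝ} (hx : x ∈ S) : d 1 x = 1 := by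
  have : ⇑(1 : Equiv.Perm ℝ) = (id : ℝ → ℝ) := rfl
  rw [d, this, derivWithin_id x S (uds x hx)]

theorem coe_pow (e : Equiv.Perm ℝ) (n : ℕ) : ⇑(e^n) = (⇑e)^[n] := Equiv.Perm.coe_pow e n

theorem pow_fixed (he : IsIcoDiff 2 e) {p : ℝ} (hfix : e p = p) (n : ℕ) : (e^n) p = p := by
  induction n with
  | zero => rfl
  | succ n ih => rw [pow_succ]; show (e^n) (e p) = p; rw [hfix, ih]

theorem d_pow_fixed (he : IsIcoDiff 2 e) {p : ℝ} (hp : p ∈ S) (hfix : e p = p) (n : ℕ) :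
    d (e^n) p = (d e p)^n := by
  induction n with
  | zero => simpa using d_one hp
  | succ n ih =>
    rw [pow_succ, deriv_comp (pow_isIcoDiff he n).1 he.1 (mapsTo he) hp, hfix, ih, pow_succ]

theorem d_pow (he : IsIcoDiff 2 e) (n : ℕ) : ∀ {x : ℝ}, x ∈ S →
    d (e^n) x = ∏ k ∈ Finset.range n, d e ((⇑e)^[k] x) := by
  induction n with
  | zero => intro x hx; simpa using d_one hx
  | succ n ih =>
    intro x hx
    rw [pow_succ, deriv_comp (pow_isIcoDiff he n).1 he.1 (mapsTo he) hx,
      ih (map_mem he hx), Finset.prod_range_succ']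
    simp [Function.iterate_succ_apply]

theorem exists_logLip (hg : IsIcoDiff 2 g) {a : ℝ} (ha : a ∈ Ioo (0:ℝ) 1) :
    ∃ C ≥ 0, ∀ s ∈ Icc 0 a, ∀ t ∈ Icc 0 a,
      |Real.log (d g s) - Real.log (d g t)| ≤ C * |s - t| := by
  have hsub : Icc (0:ℝ) a ⊆ S := Icc_subset_Ico_right ha.2
  have h1 : ContDiffOn ℝ 1 (d g) S := hg.1.derivWithin uds (by norm_num)
  have hd'cont : ContinuousOn (derivWithin (d g) S) S :=
    h1.continuousOn_derivWithin uds (le_refl 1)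
  set ψ : ℝ → ℝ := fun x => derivWithin (d g) S x / d g x with hψ
  have hψcont : ContinuousOn ψ (Icc 0 a) := by
    apply ContinuousOn.div
    · exact hd'cont.mono hsub
    · exact h1.continuousOn.mono hsub
    · intro x hx; exact ne_of_gt (deriv_pos hg (hsub hx))
  obtain ⟨C0, hC0⟩ := (isCompact_Icc).exists_bound_of_continuousOn hψcont
  refine ⟨max C0 0, le_max_right _ _, ?_⟩
  intro s hs t ht
  have hder : ∀ x ∈ Icc (0:ℝ) a,
      HasDerivWithinAt (fun y => Real.log (d g y)) (ψ x) (Icc 0 a) x := by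
    intro x hx
    have hb : HasDerivWithinAt (d g) (derivWithin (d g) S x) (Icc 0 a) x :=
      ((h1.differentiableOn (by norm_num)) x (hsub hx)).hasDerivWithinAt.mono hsub
    have hlog := (Real.hasDerivAt_log (ne_of_gt (deriv_pos hg (hsub hx)))).comp_hasDerivWithinAt x hb
    refine hlog.congr_deriv ?_
    rw [hψ]
    field_simp
  have := Convex.norm_image_sub_le_of_norm_hasDerivWithin_le
    (f := fun y => Real.log (d g y)) (f' := ψ) (C := max C0 0)
    hder (fun x hx => le_trans (hC0 x hx) (le_max_left _ _)) (convex_Icc 0 a) ht hs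
  simpa [Real.norm_eq_abs] using this

theorem distortion (hg : IsIcoDiff 2 g) (hgl : ∀ x ∈ Ioo (0:ℝ) 1, g x < x)
    {a : ℝ} (ha : a ∈ Ioo (0:ℝ) 1) :
    ∃ V ≥ 0, ∀ (m : ℕ), ∀ x ∈ Icc (g a) a, ∀ y ∈ Icc (g a) a,
      d (g^m) x ≤ Real.exp V * d (g^m) y := by
  obtain ⟨C, hC0, hC⟩ := exists_logLip hg ha
  refine ⟨C * a, mul_nonneg hC0 ha.1.le, ?_⟩
  set A : ℕ → ℝ := fun k => (⇑g)^[k] a with hA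
  have hAmem : ∀ k, A k ∈ Ioo (0:ℝ) 1 := by
    intro k; induction k with
    | zero => exact ha
    | succ k ih =>
      have : A (k+1) = g (A k) := Function.iterate_succ_apply' ⇑g k a
      rw [this]; exact map_Ioo hg ih
  have hAsucc : ∀ k, A (k+1) = g (A k) := fun k => Function.iterate_succ_apply' ⇑g k a
  have hAdec : ∀ k, A (k+1) < A k := by
    intro k; rw [hAsucc k]; exact hgl _ (hAmem k)
  have hAle : ∀ k, A k ≤ a := by
    intro k; induction k with
    | zero => exact le_rfl
    | succ k ih => exact le_trans (hAdec k).le ih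
  have hIccS : Icc (g a) a ⊆ S := by
    intro z hz
    have h1 : (0:ℝ) < g a := (map_Ioo hg ha).1
    exact ⟨le_trans h1.le hz.1, lt_of_le_of_lt hz.2 ha.2⟩
  have htile : ∀ x ∈ Icc (g a) a, ∀ k, (⇑g)^[k] x ∈ Icc (A (k+1)) (A k) := by
    intro x hx k
    induction k with
    | zero =>
      rw [hAsucc 0]; exact hx
    | succ k ih =>
      have e1 : (⇑g)^[k+1] x = g ((⇑g)^[k] x) := Function.iterate_succ_apply' ⇑g k x
      have hkS : (⇑g)^[k] x ∈ S := by
        refine ⟨le_trans (hAmem (k+1)).1.le ih.1, lt_of_le_of_lt ih.2 (lt_of_le_of_lt (hAle k) ha.2)⟩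
      constructor
      · rw [e1, hAsucc (k+1)]
        exact le_map hg (Ioo_subset_Ico_self (hAmem (k+1))) hkS ih.1
      · rw [e1, hAsucc k]
        exact le_map hg hkS (Ioo_subset_Ico_self (hAmem k)) ih.2
  have htileIcc : ∀ x ∈ Icc (g a) a, ∀ k, (⇑g)^[k] x ∈ Icc (0:ℝ) a := by
    intro x hx k
    exact ⟨le_trans (hAmem (k+1)).1.le (htile x hx k).1, le_trans (htile x hx k).2 (hAle k)⟩
  intro m x hx y hy
  have hxS := hIccS hx
  have hyS := hIccS hy
  have hlogdiff : Real.log (d (g^m) x) - Real.log (d (g^m) y) ≤ C * a := by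
    rw [d_pow hg m hxS, d_pow hg m hyS]
    have hmemS : ∀ z ∈ Icc (g a) a, ∀ k : ℕ, (⇑g)^[k] z ∈ S := by
      intro z hz k
      have h1 := htileIcc z hz k
      exact ⟨h1.1, lt_of_le_of_lt h1.2 ha.2⟩
    rw [Real.log_prod (fun k _ => ne_of_gt (deriv_pos hg (hmemS x hx k)))]
    rw [Real.log_prod (fun k _ => ne_of_gt (deriv_pos hg (hmemS y hy k)))]
    rw [← Finset.sum_sub_distrib]
    have hterm : ∀ k ∈ Finset.range m,
        Real.log (d g ((⇑g)^[k] x)) - Real.log (d g ((⇑g)^[k] y)) ≤ C * (A k - A (k+1)) := by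
      intro k _
      have h1 := hC _ (htileIcc x hx k) _ (htileIcc y hy k)
      have h2 : |(⇑g)^[k] x - (⇑g)^[k] y| ≤ A k - A (k+1) := by
        have t1 := htile x hx k
        have t2 := htile y hy k
        rw [abs_le]
        constructor <;> [linarith [t1.1, t2.2]; linarith [t1.2, t2.1]]
      calc Real.log (d g ((⇑g)^[k] x)) - Real.log (d g ((⇑g)^[k] y))
          ≤ |Real.log (d g ((⇑g)^[k] x)) - Real.log (d g ((⇑g)^[k] y))| := le_abs_self _
        _ ≤ C * |(⇑g)^[k] x - (⇑g)^[k] y| := h1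
        _ ≤ C * (A k - A (k+1)) := by
            exact mul_le_mul_of_nonneg_left h2 hC0
    calc ∑ k ∈ Finset.range m, (Real.log (d g ((⇑g)^[k] x)) - Real.log (d g ((⇑g)^[k] y)))
        ≤ ∑ k ∈ Finset.range m, C * (A k - A (k+1)) := Finset.sum_le_sum hterm
      _ = C * (A 0 - A m) := by
          rw [← Finset.mul_sum]
          congr 1
          have := Finset.sum_range_sub' A m
          simpa using this
      _ ≤ C * a := by
          have h0 : A 0 = a := rfl
          have := (hAmem m).1
          nlinarith
  have hdx : 0 < d (g^m) x := deriv_pos (pow_isIcoDiff hg m) hxS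
  have hdy : 0 < d (g^m) y := deriv_pos (pow_isIcoDiff hg m) hyS
  calc d (g^m) x = Real.exp (Real.log (d (g^m) x)) := (Real.exp_log hdx).symm
    _ ≤ Real.exp (C * a + Real.log (d (g^m) y)) := by
        apply Real.exp_le_exp.mpr; linarith
    _ = Real.exp (C * a) * d (g^m) y := by rw [Real.exp_add, Real.exp_log hdy]

theorem comm_apply {f : Equiv.Perm ℝ} (hc : Commute g f) (x : ℝ) : g (f x) = f (g x) :=
  DFunLike.congr_fun hc.eq x

theorem key_bound {f : Equiv.Perm ℝ} (hg : IsIcoDiff 2 g)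
    (hgl : ∀ x ∈ Ioo (0:ℝ) 1, g x < x) (hf : IsIcoDiff 2 f) (hcomm : Commute g f)
    {a : ℝ} (ha : a ∈ Ioo (0:ℝ) 1) (hfa : f a = a) :
    ∃ V ≥ 0, ∀ (n : ℕ), ∀ x ∈ Icc (g a) a,
      Real.exp (-V) * (d f 0)^n ≤ d (f^n) x ∧ d (f^n) x ≤ Real.exp V * (d f 0)^n := by
  obtain ⟨V, hV0, hdist⟩ := distortion hg hgl ha
  refine ⟨V, hV0, ?_⟩
  have h0S : (0:ℝ) ∈ S := ⟨le_rfl, by norm_num⟩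
  have hgaIoo : g a ∈ Ioo (0:ℝ) 1 := map_Ioo hg ha
  have hIccS : Icc (g a) a ⊆ S := fun z hz =>
    ⟨le_trans hgaIoo.1.le hz.1, lt_of_le_of_lt hz.2 ha.2⟩
  have hfga : f (g a) = g a := by rw [← comm_apply hcomm, hfa]
  intro n x hx
  have hxS := hIccS hx
  have hFa : (f^n) a = a := pow_fixed hf hfa n
  have hFga : (f^n) (g a) = g a := pow_fixed hf hfga n
  have hFx : (f^n) x ∈ Icc (g a) a := by
    constructor
    · rw [← hFga]
      exact le_map (pow_isIcoDiff hf n) (Ioo_subset_Ico_self hgaIoo) hxS hx.1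
    · rw [← hFa]
      exact le_map (pow_isIcoDiff hf n) hxS (Ioo_subset_Ico_self ha) hx.2
  have hclaim : ∀ m : ℕ,
      d (f^n) x ≤ d (f^n) ((⇑g)^[m] x) * Real.exp V ∧
      d (f^n) ((⇑g)^[m] x) * Real.exp (-V) ≤ d (f^n) x := by
    intro m
    have hgm := pow_isIcoDiff hg m
    have hfn := pow_isIcoDiff hf n
    have hcoe : (g^m) x = (⇑g)^[m] x := by rw [coe_pow]
    have hgmxS : (g^m) x ∈ S := map_mem hgm hxS
    have e1 : d ((g^m) * (f^n)) x = d (g^m) ((f^n) x) * d (f^n) x :=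
      deriv_comp hgm.1 hfn.1 (mapsTo hfn) hxS
    have e2 : d ((f^n) * (g^m)) x = d (f^n) ((g^m) x) * d (g^m) x :=
      deriv_comp hfn.1 hgm.1 (mapsTo hgm) hxS
    have hcm : (g^m) * (f^n) = (f^n) * (g^m) := (hcomm.pow_pow m n).eq
    rw [hcm, e2] at e1
    -- e1 : d (f^n) ((g^m) x) * d (g^m) x = d (g^m) ((f^n) x) * d (f^n) x
    have p1 : 0 < d (g^m) ((f^n) x) := deriv_pos hgm (hIccS hFx)
    have p2 : 0 < d (g^m) x := deriv_pos hgm hxS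
    have p3 : 0 < d (f^n) ((g^m) x) := deriv_pos hfn hgmxS
    have p4 : 0 < d (f^n) x := deriv_pos hfn hxS
    have dist1 : d (g^m) ((f^n) x) ≤ Real.exp V * d (g^m) x := hdist m _ hFx _ hx
    have dist2 : d (g^m) x ≤ Real.exp V * d (g^m) ((f^n) x) := hdist m _ hx _ hFx
    have hEpos : 0 < Real.exp V := Real.exp_pos V
    have hEE : Real.exp (-V) * Real.exp V = 1 := by
      rw [← Real.exp_add]; simp
    constructor
    · rw [← hcoe]
      nlinarith [mul_le_mul_of_nonneg_left dist2 p3.le]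
    · rw [← hcoe]
      have hA : d (f^n) ((g^m) x) * d (g^m) x ≤ (Real.exp V * d (f^n) x) * d (g^m) x := by
        rw [e1]; nlinarith [mul_le_mul_of_nonneg_right dist1 p4.le]
      have h3 : d (f^n) ((g^m) x) ≤ Real.exp V * d (f^n) x :=
        le_of_mul_le_mul_right hA p2
      calc d (f^n) ((g^m) x) * Real.exp (-V)
          ≤ (Real.exp V * d (f^n) x) * Real.exp (-V) := by
            nlinarith [Real.exp_pos (-V)]
        _ = d (f^n) x := by
            rw [mul_comm (Real.exp V), mul_assoc, ← Real.exp_add]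
            simp
  have htend0 : Tendsto (fun m => (⇑g)^[m] x) atTop (𝓝 0) := by
    apply orbit_tendsto ⇑g (continuousOn hg) le_rfl hxS.2 (lt_of_lt_of_le hgaIoo.1 hx.1)
    · intro y hy
      have hyS : y ∈ S := ⟨hy.1.le, lt_of_le_of_lt hy.2 hxS.2⟩
      have hy1 : g y > 0 := by
        have := lt_map hg h0S hyS hy.1
        rwa [map_zero hg] at this
      exact ⟨hy1, le_trans (hgl y ⟨hy.1, hyS.2⟩).le hy.2⟩
    · intro y hy
      exact hgl y ⟨hy.1, lt_of_le_of_lt hy.2 hxS.2⟩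
  have hcontd : ContinuousOn (d (f^n)) S :=
    (pow_isIcoDiff hf n).1.continuousOn_derivWithin uds (by norm_num)
  have htendd : Tendsto (fun m => d (f^n) ((⇑g)^[m] x)) atTop (𝓝 (d (f^n) 0)) := by
    have hcw : ContinuousWithinAt (d (f^n)) S 0 := hcontd 0 h0S
    apply hcw.tendsto.comp
    rw [tendsto_nhdsWithin_iff]
    constructor
    · exact htend0
    · apply Filter.Eventually.of_forall
      intro m
      induction m with
      | zero => exact hxS
      | succ m ih =>
        rw [Function.iterate_succ_apply']
        exact map_mem hg ih
  have hd0 : d (f^n) 0 = (d f 0)^n := d_pow_fixed hf h0S (map_zero hf) n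
  constructor
  · have h1 : Tendsto (fun m => d (f^n) ((⇑g)^[m] x) * Real.exp (-V)) atTop
        (𝓝 (d (f^n) 0 * Real.exp (-V))) := htendd.mul_const _
    have h2 := le_of_tendsto h1 (Filter.Eventually.of_forall (fun m => (hclaim m).2))
    rw [hd0] at h2
    linarith [h2]
  · have h1 : Tendsto (fun m => d (f^n) ((⇑g)^[m] x) * Real.exp V) atTop
        (𝓝 (d (f^n) 0 * Real.exp V)) := htendd.mul_const _
    have h2 := ge_of_tendsto h1 (Filter.Eventually.of_forall (fun m => (hclaim m).1))
    rw [hd0] at h2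
    linarith [h2]

theorem kopell_core {f : Equiv.Perm ℝ} (hg : IsIcoDiff 2 g)
    (hgl : ∀ x ∈ Ioo (0:ℝ) 1, g x < x) (hf : IsIcoDiff 2 f) (hcomm : Commute g f)
    {a b : ℝ} (ha : a ∈ Ioo (0:ℝ) 1) (hfa : f a = a)
    (hb : b ∈ Ioo (g a) a) (hfb : f b < b) : False := by
  have hgaIoo : g a ∈ Ioo (0:ℝ) 1 := map_Ioo hg ha
  have hbIoo : b ∈ Ioo (0:ℝ) 1 := ⟨lt_trans hgaIoo.1 hb.1, lt_trans hb.2 ha.2⟩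
  have hIccS : Icc (g a) a ⊆ S := fun z hz =>
    ⟨le_trans hgaIoo.1.le hz.1, lt_of_le_of_lt hz.2 ha.2⟩
  have hIccbS : Icc (g a) b ⊆ S := fun z hz =>
    ⟨le_trans hgaIoo.1.le hz.1, lt_of_le_of_lt hz.2 hbIoo.2⟩
  have hfga : f (g a) = g a := by rw [← comm_apply hcomm, hfa]
  -- the set of fixed points below b
  set K : Set ℝ := Icc (g a) b ∩ (fun y => f y - y) ⁻¹' {0} with hK
  have hKsub : K ⊆ Icc (g a) b := inter_subset_left
  have hKne : (g a) ∈ K := by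
    refine ⟨⟨le_rfl, hb.1.le⟩, ?_⟩
    simp [hfga]
  have hKclosed : IsClosed K := by
    apply ContinuousOn.preimage_isClosed_of_isClosed
    · exact ((continuousOn hf).mono hIccbS).sub continuousOn_id
    · exact isClosed_Icc
    · exact isClosed_singleton
  have hKcomp : IsCompact K := isCompact_Icc.of_isClosed_subset hKclosed hKsub
  set bs := sSup K with hbs
  have hbsK : bs ∈ K := hKcomp.sSup_mem ⟨_, hKne⟩
  have hfbs : f bs = bs := by
    have := hbsK.2
    simp only [mem_preimage, mem_singleton_iff] at this
    linarith [this]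
  have hbsmem : bs ∈ Icc (g a) b := hKsub hbsK
  have hbsb : bs < b := lt_of_le_of_ne hbsmem.2 (fun h => by rw [h] at hfbs; linarith)
  have hbsIoo : bs ∈ Ioo (0:ℝ) 1 := ⟨lt_of_lt_of_le hgaIoo.1 hbsmem.1, lt_of_le_of_lt hbsmem.2 hbIoo.2⟩
  have hnofix : ∀ y ∈ Ioc bs b, f y ≠ y := by
    intro y hy hfy
    have hyK : y ∈ K := ⟨⟨le_trans hbsmem.1 hy.1.le, hy.2⟩, by simp [hfy]⟩
    have : y ≤ bs := le_csSup hKcomp.bddAbove hyK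
    linarith [hy.1]
  have hsign : ∀ y ∈ Ioc bs b, f y < y := by
    intro y hy
    rcases lt_or_gt_of_ne (hnofix y hy) with h | h
    · exact h
    exfalso
    have hyb : y < b := by
      rcases eq_or_lt_of_le hy.2 with rfl | h' 
      · linarith
      · exact h'
    set p : ℝ → ℝ := fun t => f t - t with hp
    have hpc : ContinuousOn p (Icc y b) := by
      apply ContinuousOn.sub _ continuousOn_id
      apply (continuousOn hf).mono
      intro z hz
      exact ⟨le_trans hgaIoo.1.le (le_trans (le_trans hbsmem.1 hy.1.le) hz.1),
        lt_of_le_of_lt hz.2 hbIoo.2⟩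
    have h0mem : (0:ℝ) ∈ Icc (p b) (p y) := ⟨by simp [hp]; linarith, by simp [hp]; linarith⟩
    obtain ⟨z, hz, hpz⟩ := intermediate_value_Icc' hyb.le hpc h0mem
    have hfz : f z = z := by
      simp only [hp] at hpz
      linarith [hpz]
    exact hnofix z ⟨lt_of_lt_of_le hy.1 hz.1, hz.2⟩ hfz
  have hmaps : ∀ y ∈ Ioc bs b, f y ∈ Ioc bs b := by
    intro y hy
    constructor
    · rw [← hfbs]
      exact lt_map hf (Ioo_subset_Ico_self hbsIoo)
        ⟨le_trans hbsIoo.1.le hy.1.le, lt_of_le_of_lt hy.2 hbIoo.2⟩ hy.1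
    · exact le_trans (hsign y hy).le hy.2
  have htb : Tendsto (fun n => (⇑f)^[n] b) atTop (𝓝 bs) :=
    orbit_tendsto ⇑f (continuousOn hf) hbsIoo.1.le hbIoo.2 hbsb hmaps hsign
  have hBmem : ∀ n, (⇑f)^[n] b ∈ Ioc bs b := by
    intro n
    induction n with
    | zero => exact ⟨hbsb, le_rfl⟩
    | succ n ih =>
      rw [Function.iterate_succ_apply']
      exact hmaps _ ih
  obtain ⟨V, hV0, hkey⟩ := key_bound hg hgl hf hcomm ha hfa
  set D := d f 0 with hD
  have hmain : ∀ n : ℕ, Real.exp (-V) * Real.exp (-V) ≤ ((⇑f)^[n] b - bs) / (b - bs) := by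
    intro n
    have hfn := pow_isIcoDiff hf n
    have hderivAt : ∀ t ∈ Ioo (0:ℝ) 1, HasDerivAt ⇑(f^n) (d (f^n) t) t := by
      intro t ht
      exact (hasDeriv hfn.1 (Ioo_subset_Ico_self ht)).hasDerivAt
        (mem_nhds_iff.mpr ⟨Ioo 0 1, Ioo_subset_Ico_self, isOpen_Ioo, ht⟩)
    -- MVT on [bs, b]
    obtain ⟨ξ, hξ, hslope1⟩ := exists_hasDerivAt_eq_slope ⇑(f^n) (fun t => d (f^n) t) hbsb
      (hfn.1.continuousOn.mono (fun z hz =>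
        ⟨le_trans hbsIoo.1.le hz.1, lt_of_le_of_lt hz.2 hbIoo.2⟩))
      (fun t ht => hderivAt t ⟨lt_trans hbsIoo.1 ht.1, lt_trans ht.2 hbIoo.2⟩)
    -- MVT on [b, a]
    obtain ⟨η, hη, hslope2⟩ := exists_hasDerivAt_eq_slope ⇑(f^n) (fun t => d (f^n) t) hb.2
      (hfn.1.continuousOn.mono (fun z hz =>
        ⟨le_trans hbIoo.1.le hz.1, lt_of_le_of_lt hz.2 ha.2⟩))
      (fun t ht => hderivAt t ⟨lt_trans hbIoo.1 ht.1, lt_trans ht.2 ha.2⟩)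
    have hfnb : (f^n) b = (⇑f)^[n] b := by rw [coe_pow]
    have hfnbs : (f^n) bs = bs := pow_fixed hf hfbs n
    have hfna : (f^n) a = a := pow_fixed hf hfa n
    rw [hfnb, hfnbs] at hslope1
    rw [hfna, hfnb] at hslope2
    have hξmem : ξ ∈ Icc (g a) a :=
      ⟨le_trans hbsmem.1 hξ.1.le, le_trans hξ.2.le (le_trans hb.2.le le_rfl)⟩
    have hηmem : η ∈ Icc (g a) a := ⟨le_trans hb.1.le hη.1.le, hη.2.le⟩
    have hk1 := (hkey n ξ hξmem).1
    have hk2 := (hkey n η hηmem).2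
    have hslope2ge : 1 ≤ d (f^n) η := by
      rw [hslope2]
      rw [le_div_iff₀ (by linarith [hb.2])]
      have := (hBmem n).2
      linarith
    have hDn : Real.exp (-V) ≤ D^n := by
      have h1 : 1 ≤ Real.exp V * D^n := le_trans hslope2ge hk2
      have h2 := mul_le_mul_of_nonneg_left h1 (Real.exp_pos (-V)).le
      rw [mul_one, ← mul_assoc, ← Real.exp_add] at h2
      simpa using h2
    have : Real.exp (-V) * Real.exp (-V) ≤ d (f^n) ξ := by
      calc Real.exp (-V) * Real.exp (-V) ≤ Real.exp (-V) * D^n := by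
            exact mul_le_mul_of_nonneg_left hDn (Real.exp_pos (-V)).le
        _ ≤ d (f^n) ξ := hk1
    rw [hslope1] at this
    exact this
  -- contradiction with convergence
  have htb2 : Tendsto (fun n => ((⇑f)^[n] b - bs) / (b - bs)) atTop (𝓝 0) := by
    have h1 := (htb.sub_const bs).div_const (b - bs)
    simpa using h1
  have hpos : (0:ℝ) < Real.exp (-V) * Real.exp (-V) := by positivity
  have := htb2.eventually_lt_const hpos
  rcases this.exists with ⟨n, hn⟩
  linarith [hmain n]

theorem g_orbit_zero (hg : IsIcoDiff 2 g) (hgl : ∀ x ∈ Ioo (0:ℝ) 1, g x < x)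
    {z : ℝ} (hz : z ∈ Ioo (0:ℝ) 1) :
    Tendsto (fun m => (⇑g)^[m] z) atTop (𝓝 0) := by
  apply orbit_tendsto ⇑g (continuousOn hg) le_rfl hz.2 hz.1
  · intro y hy
    have hyS : y ∈ S := ⟨hy.1.le, lt_of_le_of_lt hy.2 hz.2⟩
    have hy1 : 0 < g y := by
      have := lt_map hg ⟨le_rfl, by norm_num⟩ hyS hy.1
      rwa [map_zero hg] at this
    exact ⟨hy1, le_trans (hgl y ⟨hy.1, hyS.2⟩).le hy.2⟩
  · intro y hy
    exact hgl y ⟨hy.1, lt_of_le_of_lt hy.2 hz.2⟩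

theorem inv_gt (hg : IsIcoDiff 2 g) (hgl : ∀ x ∈ Ioo (0:ℝ) 1, g x < x)
    {y : ℝ} (hy : y ∈ Ioo (0:ℝ) 1) : y < g⁻¹ y := by
  have h1 : g y < y := hgl y hy
  have h2 := lt_map (inv_isIcoDiff hg) (Ioo_subset_Ico_self (map_Ioo hg hy))
    (Ioo_subset_Ico_self hy) h1
  have h3 : g⁻¹ (g y) = y := g.symm_apply_apply y
  rwa [h3] at h2

theorem kopell {f : Equiv.Perm ℝ} (hg : IsIcoDiff 2 g)
    (hgl : ∀ x ∈ Ioo (0:ℝ) 1, g x < x) (hf : IsIcoDiff 2 f) (hcomm : Commute g f)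
    {z : ℝ} (hz : z ∈ Ioo (0:ℝ) 1) (hfz : f z = z) : f = 1 := by
  have hfix : ∀ x ∈ Ioo (0:ℝ) 1, f x = x := by
    intro x hx
    by_contra hfx
    -- f fixes the whole g-orbit (in both directions) of z
    have hfun : ∀ k : ℕ, f ((⇑g)^[k] z) = (⇑g)^[k] z := by
      intro k
      have hcomm' : Function.Commute ⇑f ⇑g := fun y => (comm_apply hcomm y).symm
      have := (hcomm'.iterate_right k) z
      rw [hfz] at this
      exact this
    have hfuninv : ∀ k : ℕ, f ((⇑g⁻¹)^[k] z) = (⇑g⁻¹)^[k] z := by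
      intro k
      have hcomm' : Function.Commute ⇑f ⇑g⁻¹ := by
        intro y
        apply g.injective
        rw [comm_apply hcomm (g⁻¹ y)]
        simp
      have := (hcomm'.iterate_right k) z
      rw [hfz] at this
      exact this
    -- find a fixed point a' with x ∈ Ioo (g a') a'
    obtain ⟨a', ha'1, hfa', hax⟩ :
        ∃ a', a' ∈ Ioo (0:ℝ) 1 ∧ f a' = a' ∧ x ∈ Ioo (g a') a' := by
      rcases le_or_gt x z with hxz | hzx
      · have hxz' : x < z := lt_of_le_of_ne hxz (fun h => hfx (h ▸ hfz))
        have horb := g_orbit_zero hg hgl hz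
        have hmem : ∀ m, (⇑g)^[m] z ∈ Ioo (0:ℝ) 1 := by
          intro m
          induction m with
          | zero => exact hz
          | succ m ih => rw [Function.iterate_succ_apply']; exact map_Ioo hg ih
        have hex : ∃ m, (⇑g)^[m] z < x := by
          have := horb.eventually_lt_const hx.1
          exact this.exists
        have hmne : Nat.find hex ≠ 0 := by
          intro h
          have h1 := Nat.find_spec hex
          rw [h] at h1
          simp only [Function.iterate_zero_apply] at h1
          linarith
        obtain ⟨k, hmk⟩ := Nat.exists_eq_succ_of_ne_zero hmne
        have hk : x ≤ (⇑g)^[k] z := by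
          have := Nat.find_min hex (show k < Nat.find hex by omega)
          push_neg at this
          exact this
        have hkne : (⇑g)^[k] z ≠ x := fun h => hfx (h ▸ hfun k)
        refine ⟨(⇑g)^[k] z, hmem k, hfun k, ?_, lt_of_le_of_ne hk (Ne.symm hkne)⟩
        rw [← Function.iterate_succ_apply' ⇑g k z]
        have hsp := Nat.find_spec hex
        rw [hmk] at hsp
        exact hsp
      · -- x > z : go up with g⁻¹
        have hgi := inv_isIcoDiff hg
        have hmem : ∀ m, (⇑g⁻¹)^[m] z ∈ Ioo (0:ℝ) 1 := by
          intro m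
          induction m with
          | zero => exact hz
          | succ m ih => rw [Function.iterate_succ_apply']; exact map_Ioo hgi ih
        have horb : Tendsto (fun m => (⇑g⁻¹)^[m] z) atTop (𝓝 1) := by
          apply orbit_tendsto_one ⇑g⁻¹ (continuousOn hgi) hz
          · intro y hy
            have hyIoo : y ∈ Ioo (0:ℝ) 1 := ⟨lt_of_lt_of_le hz.1 hy.1, hy.2⟩
            exact ⟨le_trans hy.1 (inv_gt hg hgl hyIoo).le, (map_Ioo hgi hyIoo).2⟩
          · intro y hy
            exact inv_gt hg hgl ⟨lt_of_lt_of_le hz.1 hy.1, hy.2⟩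
        have hex : ∃ m, x < (⇑g⁻¹)^[m] z := by
          have := horb.eventually_const_lt hx.2
          exact this.exists
        have hmne : Nat.find hex ≠ 0 := by
          intro h
          have h1 := Nat.find_spec hex
          rw [h] at h1
          simp only [Function.iterate_zero_apply] at h1
          linarith
        obtain ⟨k, hmk⟩ := Nat.exists_eq_succ_of_ne_zero hmne
        have hk : (⇑g⁻¹)^[k] z ≤ x := by
          have := Nat.find_min hex (show k < Nat.find hex by omega)
          push_neg at this
          exact this
        have hkne : (⇑g⁻¹)^[k] z ≠ x := fun h => hfx (h ▸ hfuninv k)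
        refine ⟨(⇑g⁻¹)^[k+1] z, hmem (k+1), hfuninv (k+1), ?_, ?_⟩
        · have hgk : g ((⇑g⁻¹)^[k+1] z) = (⇑g⁻¹)^[k] z := by
            rw [Function.iterate_succ_apply' ⇑g⁻¹ k z]
            exact g.apply_symm_apply _
          rw [hgk]
          exact lt_of_le_of_ne hk hkne
        · rw [show k+1 = Nat.find hex by omega]
          exact Nat.find_spec hex
    rcases lt_or_gt_of_ne (fun h : f x = x => hfx h) with hlt | hgt
    · exact kopell_core hg hgl hf hcomm ha'1 hfa' hax hlt
    · have hfi := inv_isIcoDiff hf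
      have hcomm' : Commute g f⁻¹ := hcomm.inv_right
      have hfia' : f⁻¹ a' = a' := by
        conv_lhs => rw [← hfa']
        exact f.symm_apply_apply a'
      have hfix' : f⁻¹ x < x := by
        have h1 := lt_map hfi (Ioo_subset_Ico_self hx)
          (Ioo_subset_Ico_self (map_Ioo hf hx)) hgt
        rwa [show f⁻¹ (f x) = x from f.symm_apply_apply x] at h1
      exact kopell_core hg hgl hfi hcomm' ha'1 hfia' hax hfix'
  -- conclude f = 1
  apply Equiv.ext
  intro x
  by_cases hxS : x ∈ S
  · rcases eq_or_lt_of_le hxS.1 with h | h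
    · rw [← h]; exact map_zero hf
    · exact hfix x ⟨h, hxS.2⟩
  · exact hf.2.2.2.2 x hxS

/-! ### Order lemmas on the centralizer -/

theorem fixed_eq_one {k : Equiv.Perm ℝ} (hg : IsIcoDiff 2 g)
    (hgl : ∀ x ∈ Ioo (0:ℝ) 1, g x < x) (hk : IsIcoDiff 2 k) (hck : Commute g k)
    {w : ℝ} (hw : w ∈ Ioo (0:ℝ) 1) (hfix : k w = w) : k = 1 :=
  kopell hg hgl hk hck hw hfix

theorem sign_lemma {k : Equiv.Perm ℝ} (hg : IsIcoDiff 2 g)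
    (hgl : ∀ x ∈ Ioo (0:ℝ) 1, g x < x) (hk : IsIcoDiff 2 k) (hck : Commute g k)
    {x₀ : ℝ} (hx₀ : x₀ ∈ Ioo (0:ℝ) 1) (hlt : k x₀ < x₀) :
    ∀ w ∈ Ioo (0:ℝ) 1, k w < w := by
  have hnofix : ∀ w ∈ Ioo (0:ℝ) 1, k w ≠ w := by
    intro w hw hfix
    have := fixed_eq_one hg hgl hk hck hw hfix
    rw [this] at hlt
    simp at hlt
  intro w hw
  rcases lt_or_gt_of_ne (hnofix w hw) with h | h
  · exact h
  exfalso
  set p : ℝ → ℝ := fun t => k t - t with hp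
  have hws : w ≠ x₀ := by
    intro heq
    rw [heq] at h
    linarith
  rcases lt_or_gt_of_ne hws with hlt' | hgt'
  · have hpc : ContinuousOn p (Icc w x₀) := by
      apply ContinuousOn.sub _ continuousOn_id
      apply (continuousOn hk).mono
      intro t ht
      exact ⟨le_trans hw.1.le ht.1, lt_of_le_of_lt ht.2 hx₀.2⟩
    have h0mem : (0:ℝ) ∈ Icc (p x₀) (p w) := ⟨by simp [hp]; linarith, by simp [hp]; linarith⟩
    obtain ⟨z, hz, hpz⟩ := intermediate_value_Icc' hlt'.le hpc h0mem
    have : k z = z := by simp only [hp] at hpz; linarith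
    exact hnofix z ⟨lt_of_lt_of_le hw.1 hz.1, lt_of_le_of_lt hz.2 hx₀.2⟩ this
  · have hpc : ContinuousOn p (Icc x₀ w) := by
      apply ContinuousOn.sub _ continuousOn_id
      apply (continuousOn hk).mono
      intro t ht
      exact ⟨le_trans hx₀.1.le ht.1, lt_of_le_of_lt ht.2 hw.2⟩
    have h0mem : (0:ℝ) ∈ Icc (p x₀) (p w) := ⟨by simp [hp]; linarith, by simp [hp]; linarith⟩
    obtain ⟨z, hz, hpz⟩ := intermediate_value_Icc hgt'.le hpc h0mem
    have : k z = z := by simp only [hp] at hpz; linarith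
    exact hnofix z ⟨lt_of_lt_of_le hx₀.1 hz.1, lt_of_le_of_lt hz.2 hw.2⟩ this

theorem sign_lemma_gt {k : Equiv.Perm ℝ} (hg : IsIcoDiff 2 g)
    (hgl : ∀ x ∈ Ioo (0:ℝ) 1, g x < x) (hk : IsIcoDiff 2 k) (hck : Commute g k)
    {x₀ : ℝ} (hx₀ : x₀ ∈ Ioo (0:ℝ) 1) (hlt : x₀ < k x₀) :
    ∀ w ∈ Ioo (0:ℝ) 1, w < k w := by
  have hki := inv_isIcoDiff hk
  have hinvlt : k⁻¹ x₀ < x₀ := by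
    have h1 := lt_map hki (Ioo_subset_Ico_self hx₀) (Ioo_subset_Ico_self (map_Ioo hk hx₀)) hlt
    rwa [show k⁻¹ (k x₀) = x₀ from k.symm_apply_apply x₀] at h1
  have hmain := sign_lemma hg hgl hki hck.inv_right hx₀ hinvlt
  intro w hw
  have h1 := hmain w hw
  have h2 := lt_map hk (Ioo_subset_Ico_self (map_Ioo hki hw)) (Ioo_subset_Ico_self hw) h1
  rwa [show k (k⁻¹ w) = w from k.apply_symm_apply w] at h2

/-- uniform comparison from a single point -/
theorem ord_lemma {h h' : Equiv.Perm ℝ} (hg : IsIcoDiff 2 g)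
    (hgl : ∀ x ∈ Ioo (0:ℝ) 1, g x < x)
    (hh : IsIcoDiff 2 h) (hch : Commute g h) (hh' : IsIcoDiff 2 h') (hch' : Commute g h')
    {x₀ : ℝ} (hx₀ : x₀ ∈ Ioo (0:ℝ) 1) (hle : h x₀ ≤ h' x₀) :
    h = h' ∨ ∀ w ∈ Ioo (0:ℝ) 1, h w < h' w := by
  set k := h'⁻¹ * h with hkdef
  have hkI : IsIcoDiff 2 k := mul_isIcoDiff (inv_isIcoDiff hh') hh
  have hkc : Commute g k := (hch'.inv_right).mul_right hch
  by_cases hk1 : k = 1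
  · left
    have : h'⁻¹ * h = 1 := hk1
    exact (inv_mul_eq_one.mp this).symm
  · right
    have hkx : k x₀ ≤ x₀ := by
      have h1 : k x₀ = h'⁻¹ (h x₀) := rfl
      rw [h1]
      have h2 := le_map (inv_isIcoDiff hh') (map_mem hh (Ioo_subset_Ico_self hx₀))
        (map_mem hh' (Ioo_subset_Ico_self hx₀)) hle
      rwa [show h'⁻¹ (h' x₀) = x₀ from h'.symm_apply_apply x₀] at h2
    have hkx' : k x₀ < x₀ := by
      rcases eq_or_lt_of_le hkx with h | h
      · exact absurd (fixed_eq_one hg hgl hkI hkc (map_Ioo hkI hx₀ |> fun _ => hx₀) h) hk1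
      · exact h
    have hsign := sign_lemma hg hgl hkI hkc hx₀ hkx'
    intro w hw
    have h1 : k w < w := hsign w hw
    have h2 := lt_map hh' (Ioo_subset_Ico_self (map_Ioo hkI hw)) (Ioo_subset_Ico_self hw) h1
    have h3 : h' (k w) = h w := by
      show h' (h'⁻¹ (h w)) = h w
      exact h'.apply_symm_apply (h w)
    rwa [h3] at h2

theorem inv_lt_self {δ : Equiv.Perm ℝ} (hδ : IsIcoDiff 2 δ)
    (hpos : ∀ w ∈ Ioo (0:ℝ) 1, w < δ w) {w : ℝ} (hw : w ∈ Ioo (0:ℝ) 1) : δ⁻¹ w < w := by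
  have h1 := lt_map (inv_isIcoDiff hδ) (Ioo_subset_Ico_self hw)
    (Ioo_subset_Ico_self (map_Ioo hδ hw)) (hpos w hw)
  rwa [show δ⁻¹ (δ w) = w from δ.symm_apply_apply w] at h1

theorem arch {δ : Equiv.Perm ℝ} (hδ : IsIcoDiff 2 δ)
    (hpos : ∀ w ∈ Ioo (0:ℝ) 1, w < δ w)
    {x₀ y : ℝ} (hx₀ : x₀ ∈ Ioo (0:ℝ) 1) (hy : y ∈ Ioo (0:ℝ) 1) :
    ∃ p : ℤ, (δ^p) x₀ ≤ y ∧ y < (δ^(p+1)) x₀ := by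
  set u : ℤ → ℝ := fun n => (δ^n) x₀ with hu
  have umem : ∀ n, u n ∈ Ioo (0:ℝ) 1 := fun n => map_Ioo (zpow_isIcoDiff hδ n) hx₀
  have usucc : ∀ n : ℤ, u (n+1) = δ (u n) := by
    intro n
    show (δ^(n+1)) x₀ = δ ((δ^n) x₀)
    rw [show (n+1 : ℤ) = 1 + n by ring, zpow_one_add]
    rfl
  have ustrict : StrictMono u := strictMono_int_of_lt_succ (fun n => by
    rw [usucc]; exact hpos _ (umem n))
  have hup : ∃ N : ℤ, y < u N := by
    have h1 : Tendsto (fun n : ℕ => (⇑δ)^[n] x₀) atTop (𝓝 1) := by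
      apply orbit_tendsto_one ⇑δ (continuousOn hδ) hx₀
      · intro w hw
        have hwIoo : w ∈ Ioo (0:ℝ) 1 := ⟨lt_of_lt_of_le hx₀.1 hw.1, hw.2⟩
        exact ⟨le_trans hw.1 (hpos w hwIoo).le, (map_Ioo hδ hwIoo).2⟩
      · intro w hw
        exact hpos w ⟨lt_of_lt_of_le hx₀.1 hw.1, hw.2⟩
    obtain ⟨n, hn⟩ := (h1.eventually_const_lt hy.2).exists
    refine ⟨(n : ℤ), ?_⟩
    have : u (n : ℤ) = (⇑δ)^[n] x₀ := by
      show (δ^(n:ℤ)) x₀ = (⇑δ)^[n] x₀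
      rw [zpow_natCast, coe_pow]
    rw [this]
    exact hn
  have hdown : ∃ M : ℤ, u M ≤ y := by
    have h2 : Tendsto (fun n : ℕ => (⇑δ⁻¹)^[n] x₀) atTop (𝓝 0) := by
      apply orbit_tendsto ⇑δ⁻¹ (continuousOn (inv_isIcoDiff hδ)) le_rfl hx₀.2 hx₀.1
      · intro w hw
        have hwIoo : w ∈ Ioo (0:ℝ) 1 := ⟨hw.1, lt_of_le_of_lt hw.2 hx₀.2⟩
        exact ⟨(map_Ioo (inv_isIcoDiff hδ) hwIoo).1, le_trans (inv_lt_self hδ hpos hwIoo).le hw.2⟩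
      · intro w hw
        exact inv_lt_self hδ hpos ⟨hw.1, lt_of_le_of_lt hw.2 hx₀.2⟩
    obtain ⟨n, hn⟩ := (h2.eventually_lt_const hy.1).exists
    refine ⟨-(n : ℤ), ?_⟩
    have : u (-(n : ℤ)) = (⇑δ⁻¹)^[n] x₀ := by
      show (δ^(-(n:ℤ))) x₀ = (⇑δ⁻¹)^[n] x₀
      rw [zpow_neg, zpow_natCast, ← inv_pow, coe_pow]
    rw [this]
    exact hn.le
  obtain ⟨N, hN⟩ := hup
  obtain ⟨M, hM⟩ := hdown
  have hbdd : ∃ b : ℤ, ∀ z : ℤ, u z ≤ y → z ≤ b := by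
    refine ⟨N, fun z hz => ?_⟩
    by_contra hc
    push_neg at hc
    have := ustrict hc
    linarith
  obtain ⟨p, hp, hmax⟩ := Int.exists_greatest_of_bdd hbdd ⟨M, hM⟩
  refine ⟨p, hp, ?_⟩
  by_contra hc
  push_neg at hc
  have := hmax (p+1) hc
  omega

theorem key_pos {h₁ h₂ : Equiv.Perm ℝ} (hg : IsIcoDiff 2 g)
    (hgl : ∀ x ∈ Ioo (0:ℝ) 1, g x < x)
    (hI1 : IsIcoDiff 2 h₁) (hc1 : Commute g h₁)
    (hI2 : IsIcoDiff 2 h₂) (hc2 : Commute g h₂)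
    {x₀ : ℝ} (hx₀ : x₀ ∈ Ioo (0:ℝ) 1)
    (hcx : x₀ < (h₁ * h₂ * h₁⁻¹ * h₂⁻¹) x₀) : False := by
  set c := h₁ * h₂ * h₁⁻¹ * h₂⁻¹ with hcdef
  have hcI : IsIcoDiff 2 c :=
    mul_isIcoDiff (mul_isIcoDiff (mul_isIcoDiff hI1 hI2) (inv_isIcoDiff hI1)) (inv_isIcoDiff hI2)
  have hcc : Commute g c :=
    ((hc1.mul_right hc2).mul_right hc1.inv_right).mul_right hc2.inv_right
  by_cases hmin : ∃ s : Equiv.Perm ℝ, (IsIcoDiff 2 s ∧ Commute g s) ∧ x₀ < s x₀ ∧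
      ∀ k : Equiv.Perm ℝ, IsIcoDiff 2 k → Commute g k → x₀ < k x₀ → s x₀ ≤ k x₀
  · obtain ⟨s, ⟨hsI, hsc⟩, hs0, hsmin⟩ := hmin
    have hspos : ∀ w ∈ Ioo (0:ℝ) 1, w < s w := sign_lemma_gt hg hgl hsI hsc hx₀ hs0
    have hrep : ∀ h : Equiv.Perm ℝ, IsIcoDiff 2 h → Commute g h → ∃ p : ℤ, h = s^p := by
      intro h hI hc
      obtain ⟨p, hp1, hp2⟩ := arch hsI hspos hx₀ (map_Ioo hI hx₀)
      set k := (s^p)⁻¹ * h with hkdef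
      have hkI : IsIcoDiff 2 k := mul_isIcoDiff (inv_isIcoDiff (zpow_isIcoDiff hsI p)) hI
      have hkc : Commute g k := ((hsc.zpow_right p).inv_right).mul_right hc
      have hkx : x₀ ≤ k x₀ := by
        have h2 := le_map (inv_isIcoDiff (zpow_isIcoDiff hsI p))
          (map_mem (zpow_isIcoDiff hsI p) (Ioo_subset_Ico_self hx₀))
          (map_mem hI (Ioo_subset_Ico_self hx₀)) hp1
        rwa [show (s^p)⁻¹ ((s^p) x₀) = x₀ from (s^p).symm_apply_apply x₀] at h2
      have hkx2 : k x₀ < s x₀ := by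
        have h2 := lt_map (inv_isIcoDiff (zpow_isIcoDiff hsI p))
          (map_mem hI (Ioo_subset_Ico_self hx₀))
          (map_mem (zpow_isIcoDiff hsI (p+1)) (Ioo_subset_Ico_self hx₀)) hp2
        have h3 : (s^(p+1)) x₀ = (s^p) (s x₀) := by
          rw [zpow_add_one]
          rfl
        rw [h3, show (s^p)⁻¹ ((s^p) (s x₀)) = s x₀ from (s^p).symm_apply_apply (s x₀)] at h2
        exact h2
      by_cases hk1 : k = 1
      · exact ⟨p, (inv_mul_eq_one.mp hk1).symm⟩
      · exfalso
        have hkx' : x₀ < k x₀ := by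
          rcases eq_or_lt_of_le hkx with heq | h
          · exact absurd (fixed_eq_one hg hgl hkI hkc hx₀ heq.symm) hk1
          · exact h
        have := hsmin k hkI hkc hkx'
        linarith
    obtain ⟨p, hp⟩ := hrep h₁ hI1 hc1
    obtain ⟨q, hq⟩ := hrep h₂ hI2 hc2
    have hc1' : c = 1 := by
      rw [hcdef, hp, hq]
      rw [show (s:Equiv.Perm ℝ)^p * s^q * (s^p)⁻¹ * (s^q)⁻¹
          = s^p * s^q * (s^q * s^p)⁻¹ by rw [mul_inv_rev]; group]
      rw [← zpow_add, ← zpow_add, add_comm]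
      simp
    rw [hc1'] at hcx
    simp at hcx
  · -- no minimal positive element
    have hex : ∃ e : Equiv.Perm ℝ, (IsIcoDiff 2 e ∧ Commute g e) ∧ x₀ < e x₀ ∧ e x₀ < c x₀ := by
      by_contra hno
      push_neg at hno
      apply hmin
      refine ⟨c, ⟨hcI, hcc⟩, hcx, ?_⟩
      intro k hkI hkc hk0
      by_contra hc'
      push_neg at hc'
      exact absurd (hno k ⟨hkI, hkc⟩ hk0) (by push_neg; exact hc')
    obtain ⟨e, ⟨heI, hec⟩, he0, helt⟩ := hex
    have hδex : ∃ δ : Equiv.Perm ℝ, IsIcoDiff 2 δ ∧ Commute g δ ∧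
        (∀ w ∈ Ioo (0:ℝ) 1, w < δ w) ∧ (∀ w ∈ Ioo (0:ℝ) 1, δ (δ w) ≤ c w) := by
      by_cases hcase : (e * e) x₀ ≤ c x₀
      · refine ⟨e, heI, hec, sign_lemma_gt hg hgl heI hec hx₀ he0, ?_⟩
        have hord := ord_lemma hg hgl (mul_isIcoDiff heI heI) (hec.mul_right hec) hcI hcc hx₀ hcase
        intro w hw
        rcases hord with heq | hlt
        · show e (e w) ≤ c w
          rw [← heq]
          exact le_rfl
        · exact (hlt w hw).le
      · set δ := e⁻¹ * c with hδdef
        have hδI : IsIcoDiff 2 δ := mul_isIcoDiff (inv_isIcoDiff heI) hcI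
        have hδc : Commute g δ := (hec.inv_right).mul_right hcc
        have hδ0 : x₀ < δ x₀ := by
          have h2 := lt_map (inv_isIcoDiff heI) (map_mem heI (Ioo_subset_Ico_self hx₀))
            (map_mem hcI (Ioo_subset_Ico_self hx₀)) helt
          rwa [show e⁻¹ (e x₀) = x₀ from e.symm_apply_apply x₀] at h2
        have hce : ∀ w ∈ Ioo (0:ℝ) 1, c w ≤ e (e w) := by
          have hord := ord_lemma hg hgl hcI hcc (mul_isIcoDiff heI heI) (hec.mul_right hec)
            hx₀ (not_le.mp hcase).le
          intro w hw
          rcases hord with heq | hlt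
          · rw [heq]; exact le_rfl
          · exact (hlt w hw).le
        refine ⟨δ, hδI, hδc, sign_lemma_gt hg hgl hδI hδc hx₀ hδ0, ?_⟩
        intro w hw
        have hw' : e⁻¹ (c w) ∈ Ioo (0:ℝ) 1 := map_Ioo (inv_isIcoDiff heI) (map_Ioo hcI hw)
        have h1 : c (e⁻¹ (c w)) ≤ e (e (e⁻¹ (c w))) := hce _ hw'
        have h4 : e (e⁻¹ (c w)) = c w := e.apply_symm_apply (c w)
        rw [h4] at h1
        -- h1 : c (e⁻¹ (c w)) ≤ e (c w)
        have h2 := le_map (inv_isIcoDiff heI)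
          (map_mem hcI (Ioo_subset_Ico_self hw'))
          (map_mem heI (Ioo_subset_Ico_self (map_Ioo hcI hw))) h1
        rw [show e⁻¹ (e (c w)) = c w from e.symm_apply_apply (c w)] at h2
        show e⁻¹ (c (e⁻¹ (c w))) ≤ c w
        exact h2
    obtain ⟨δ, hδI, hδc, hδpos, hδ2⟩ := hδex
    obtain ⟨p, hp1, hp2⟩ := arch hδI hδpos hx₀ (map_Ioo hI1 hx₀)
    obtain ⟨q, hq1, hq2⟩ := arch hδI hδpos hx₀ (map_Ioo hI2 hx₀)
    have l₁ : ∀ w ∈ Ioo (0:ℝ) 1, (δ^p) w ≤ h₁ w := by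
      have hord := ord_lemma hg hgl (zpow_isIcoDiff hδI p) (hδc.zpow_right p) hI1 hc1 hx₀ hp1
      intro w hw
      rcases hord with heq | hlt
      · rw [heq]
      · exact (hlt w hw).le
    have l₂ : ∀ w ∈ Ioo (0:ℝ) 1, (δ^q) w ≤ h₂ w := by
      have hord := ord_lemma hg hgl (zpow_isIcoDiff hδI q) (hδc.zpow_right q) hI2 hc2 hx₀ hq1
      intro w hw
      rcases hord with heq | hlt
      · rw [heq]
      · exact (hlt w hw).le
    have u₁ : ∀ w ∈ Ioo (0:ℝ) 1, h₁ w < (δ^(p+1)) w := by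
      have hord := ord_lemma hg hgl hI1 hc1 (zpow_isIcoDiff hδI (p+1)) (hδc.zpow_right (p+1))
        hx₀ hp2.le
      rcases hord with heq | hlt
      · exfalso; rw [heq] at hp2; exact lt_irrefl _ hp2
      · exact hlt
    have u₂ : ∀ w ∈ Ioo (0:ℝ) 1, h₂ w < (δ^(q+1)) w := by
      have hord := ord_lemma hg hgl hI2 hc2 (zpow_isIcoDiff hδI (q+1)) (hδc.zpow_right (q+1))
        hx₀ hq2.le
      rcases hord with heq | hlt
      · exfalso; rw [heq] at hq2; exact lt_irrefl _ hq2
      · exact hlt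
    set v := h₂ * h₁ with hvdef
    set u := h₁ * h₂ with hudef
    have hvI : IsIcoDiff 2 v := mul_isIcoDiff hI2 hI1
    have huI : IsIcoDiff 2 u := mul_isIcoDiff hI1 hI2
    set w1 := v⁻¹ x₀ with hw1def
    have hw1 : w1 ∈ Ioo (0:ℝ) 1 := map_Ioo (inv_isIcoDiff hvI) hx₀
    have claimA : (δ^(q+p)) w1 ≤ x₀ := by
      have e1 : (δ^(q+p)) w1 = (δ^q) ((δ^p) w1) := by
        rw [zpow_add]
        rfl
      have e2 : (δ^q) ((δ^p) w1) ≤ (δ^q) (h₁ w1) :=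
        le_map (zpow_isIcoDiff hδI q)
          (map_mem (zpow_isIcoDiff hδI p) (Ioo_subset_Ico_self hw1))
          (map_mem hI1 (Ioo_subset_Ico_self hw1)) (l₁ w1 hw1)
      have e3 : (δ^q) (h₁ w1) ≤ h₂ (h₁ w1) := l₂ _ (map_Ioo hI1 hw1)
      have e4 : h₂ (h₁ w1) = x₀ := by
        show v w1 = x₀
        exact v.apply_symm_apply x₀
      rw [e1]
      calc (δ^q) ((δ^p) w1) ≤ (δ^q) (h₁ w1) := e2
        _ ≤ h₂ (h₁ w1) := e3
        _ = x₀ := e4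
    set z := (δ^(-(q+p))) x₀ with hzdef
    have hz : z ∈ Ioo (0:ℝ) 1 := map_Ioo (zpow_isIcoDiff hδI _) hx₀
    have s2 : w1 ≤ z := by
      have h2 := le_map (zpow_isIcoDiff hδI (-(q+p)))
        (map_mem (zpow_isIcoDiff hδI (q+p)) (Ioo_subset_Ico_self hw1))
        (Ioo_subset_Ico_self hx₀) claimA
      have h3 : (δ^(-(q+p))) ((δ^(q+p)) w1) = w1 := by
        rw [zpow_neg]
        exact (δ^(q+p)).symm_apply_apply w1
      rwa [h3] at h2
    have s3 : u w1 ≤ u z := le_map huI (Ioo_subset_Ico_self hw1) (Ioo_subset_Ico_self hz) s2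
    have s4 : u z < (δ^(p+q+2)) z := by
      have e1 : u z = h₁ (h₂ z) := rfl
      have e2 : h₁ (h₂ z) < (δ^(p+1)) (h₂ z) := u₁ _ (map_Ioo hI2 hz)
      have e3 : (δ^(p+1)) (h₂ z) < (δ^(p+1)) ((δ^(q+1)) z) :=
        lt_map (zpow_isIcoDiff hδI (p+1))
          (map_mem hI2 (Ioo_subset_Ico_self hz))
          (map_mem (zpow_isIcoDiff hδI (q+1)) (Ioo_subset_Ico_self hz)) (u₂ _ hz)
      have e4 : (δ^(p+1)) ((δ^(q+1)) z) = (δ^(p+q+2)) z := by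
        have h : (δ^((p+1)+(q+1))) z = (δ^(p+1)) ((δ^(q+1)) z) := by
          rw [zpow_add δ (p+1) (q+1)]
          rfl
        rw [← h, show ((p+1)+(q+1) : ℤ) = p+q+2 by ring]
      rw [e1]
      calc h₁ (h₂ z) < (δ^(p+1)) (h₂ z) := e2
        _ < (δ^(p+1)) ((δ^(q+1)) z) := e3
        _ = (δ^(p+q+2)) z := e4
    have s5 : (δ^(p+q+2)) z = (δ^(2:ℤ)) x₀ := by
      rw [hzdef]
      have h : (δ^((p+q+2) + (-(q+p)))) x₀ = (δ^(p+q+2)) ((δ^(-(q+p))) x₀) := by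
        rw [zpow_add δ (p+q+2) (-(q+p))]
        rfl
      rw [← h, show ((p+q+2) + (-(q+p)) : ℤ) = 2 by ring]
    have s6 : (δ^(2:ℤ)) x₀ = δ (δ x₀) := by
      rw [show (2:ℤ) = 1 + 1 by norm_num, zpow_add, zpow_one]
      rfl
    have s7 : δ (δ x₀) ≤ c x₀ := hδ2 x₀ hx₀
    have s8 : c x₀ = u w1 := by
      have hcuv : c = u * v⁻¹ := by
        rw [hcdef, hudef, hvdef, mul_inv_rev]
        group
      rw [hcuv]
      rfl
    rw [s5, s6] at s4
    rw [s8] at s7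
    linarith

theorem sign_lemma_free {k : Equiv.Perm ℝ} (hk : IsIcoDiff 2 k)
    (hnofix : ∀ w ∈ Ioo (0:ℝ) 1, k w ≠ w)
    {x₀ : ℝ} (hx₀ : x₀ ∈ Ioo (0:ℝ) 1) (hlt : k x₀ < x₀) :
    ∀ w ∈ Ioo (0:ℝ) 1, k w < w := by
  intro w hw
  rcases lt_or_gt_of_ne (hnofix w hw) with h | h
  · exact h
  exfalso
  set p : ℝ → ℝ := fun t => k t - t with hp
  have hws : w ≠ x₀ := by
    intro heq
    rw [heq] at h
    linarith
  rcases lt_or_gt_of_ne hws with hlt' | hgt'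
  · have hpc : ContinuousOn p (Icc w x₀) := by
      apply ContinuousOn.sub _ continuousOn_id
      apply (continuousOn hk).mono
      intro t ht
      exact ⟨le_trans hw.1.le ht.1, lt_of_le_of_lt ht.2 hx₀.2⟩
    have h0mem : (0:ℝ) ∈ Icc (p x₀) (p w) := ⟨by simp [hp]; linarith, by simp [hp]; linarith⟩
    obtain ⟨z, hz, hpz⟩ := intermediate_value_Icc' hlt'.le hpc h0mem
    have : k z = z := by simp only [hp] at hpz; linarith
    exact hnofix z ⟨lt_of_lt_of_le hw.1 hz.1, lt_of_le_of_lt hz.2 hx₀.2⟩ this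
  · have hpc : ContinuousOn p (Icc x₀ w) := by
      apply ContinuousOn.sub _ continuousOn_id
      apply (continuousOn hk).mono
      intro t ht
      exact ⟨le_trans hx₀.1.le ht.1, lt_of_le_of_lt ht.2 hw.2⟩
    have h0mem : (0:ℝ) ∈ Icc (p x₀) (p w) := ⟨by simp [hp]; linarith, by simp [hp]; linarith⟩
    obtain ⟨z, hz, hpz⟩ := intermediate_value_Icc hgt'.le hpc h0mem
    have : k z = z := by simp only [hp] at hpz; linarith
    exact hnofix z ⟨lt_of_lt_of_le hx₀.1 hz.1, lt_of_le_of_lt hz.2 hw.2⟩ this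

theorem g_sign (hg : IsIcoDiff 2 g) (hgfree : ∀ x ∈ Ioo (0:ℝ) 1, g x ≠ x) :
    (∀ x ∈ Ioo (0:ℝ) 1, g x < x) ∨ (∀ x ∈ Ioo (0:ℝ) 1, x < g x) := by
  have hx₀ : (1/2 : ℝ) ∈ Ioo (0:ℝ) 1 := by norm_num
  rcases lt_or_gt_of_ne (hgfree _ hx₀) with h | h
  · exact Or.inl (sign_lemma_free hg hgfree hx₀ h)
  · right
    have hgi := inv_isIcoDiff hg
    have hnofixi : ∀ w ∈ Ioo (0:ℝ) 1, g⁻¹ w ≠ w := by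
      intro w hw heq
      apply hgfree w hw
      conv_lhs => rw [← heq]
      exact g.apply_symm_apply w
    have hlti : g⁻¹ (1/2 : ℝ) < 1/2 := by
      have h1 := lt_map hgi (Ioo_subset_Ico_self hx₀)
        (Ioo_subset_Ico_self (map_Ioo hg hx₀)) h
      rwa [show g⁻¹ (g (1/2:ℝ)) = 1/2 from g.symm_apply_apply _] at h1
    have hmain := sign_lemma_free hgi hnofixi hx₀ hlti
    intro w hw
    have h1 := hmain w hw
    have h2 := lt_map hg (Ioo_subset_Ico_self (map_Ioo hgi hw)) (Ioo_subset_Ico_self hw) h1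
    rwa [show g (g⁻¹ w) = w from g.apply_symm_apply w] at h2

theorem comm_of_lt {h₁ h₂ : Equiv.Perm ℝ} (hg : IsIcoDiff 2 g)
    (hgl : ∀ x ∈ Ioo (0:ℝ) 1, g x < x)
    (hI1 : IsIcoDiff 2 h₁) (hc1 : Commute g h₁)
    (hI2 : IsIcoDiff 2 h₂) (hc2 : Commute g h₂) : Commute h₁ h₂ := by
  have hx₀ : (1/2 : ℝ) ∈ Ioo (0:ℝ) 1 := by norm_num
  by_contra hne
  have hid : (h₁*h₂) * (h₂*h₁)⁻¹ = h₁*h₂*h₁⁻¹*h₂⁻¹ := by group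
  have hcne : h₁ * h₂ * h₁⁻¹ * h₂⁻¹ ≠ 1 := by
    intro h
    apply hne
    exact mul_inv_eq_one.mp (by rw [hid, h])
  set c := h₁ * h₂ * h₁⁻¹ * h₂⁻¹ with hcdef
  have hcI : IsIcoDiff 2 c :=
    mul_isIcoDiff (mul_isIcoDiff (mul_isIcoDiff hI1 hI2) (inv_isIcoDiff hI1)) (inv_isIcoDiff hI2)
  have hcc : Commute g c :=
    ((hc1.mul_right hc2).mul_right hc1.inv_right).mul_right hc2.inv_right
  have hcfix : c ((1:ℝ)/2) ≠ (1:ℝ)/2 := by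
    intro h
    exact hcne (fixed_eq_one hg hgl hcI hcc hx₀ h)
  rcases lt_or_gt_of_ne hcfix with hlt | hgt
  · have hinv : ((1:ℝ)/2) < c⁻¹ ((1:ℝ)/2) := by
      have h1 := lt_map (inv_isIcoDiff hcI) (Ioo_subset_Ico_self (map_Ioo hcI hx₀))
        (Ioo_subset_Ico_self hx₀) hlt
      rwa [show c⁻¹ (c ((1:ℝ)/2)) = (1:ℝ)/2 from c.symm_apply_apply _] at h1
    have hid2 : h₂ * h₁ * h₂⁻¹ * h₁⁻¹ = c⁻¹ := by
      rw [hcdef]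
      group
    have : ((1:ℝ)/2) < (h₂ * h₁ * h₂⁻¹ * h₁⁻¹) ((1:ℝ)/2) := by
      rw [hid2]
      exact hinv
    exact key_pos hg hgl hI2 hc2 hI1 hc1 hx₀ this
  · exact key_pos hg hgl hI1 hc1 hI2 hc2 hx₀ hgt

end HK

/-- Hölder–Kopell Lemma: if g is an orientation-preserving C² diffeomorphism of [0,1)
with no interior fixed point, then its centralizer in Diff₊²([0,1)) is abelian. -/
theorem holder_kopell_centralizer_abelian (g : Equiv.Perm ℝ) (hg : IsIcoDiff 2 g)
    (hgfree : ∀ x ∈ Set.Ioo (0:ℝ) 1, g x ≠ x) :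
    ∀ h₁ h₂ : Equiv.Perm ℝ, IsIcoDiff 2 h₁ → IsIcoDiff 2 h₂ →
      Commute g h₁ → Commute g h₂ → Commute h₁ h₂ := by
  intro h₁ h₂ hI1 hI2 hc1 hc2
  rcases HK.g_sign hg hgfree with hgl | hgg
  · exact HK.comm_of_lt hg hgl hI1 hc1 hI2 hc2
  · have hgi := HK.inv_isIcoDiff hg
    have hgl' : ∀ x ∈ Set.Ioo (0:ℝ) 1, g⁻¹ x < x := fun x hx => HK.inv_lt_self hg hgg hx
    exact HK.comm_of_lt hgi hgl' hI1 hc1.inv_left hI2 hc2.inv_left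
end
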